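/- arXiv:1108.4224 — 8 statements merged into one kernel-verified Lean document; each statement's English description precedes it below -/
import Mathlib

section
/- With γ⁽ᵏ⁾ ∈ 𝔽₂[x] defined by γ⁽⁰⁾ = 0, γ⁽¹⁾ = 1, γ⁽ᵏ⁾ = x·γ⁽ᵏ⁻¹⁾ + γ⁽ᵏ⁻²⁾, we have γ⁽²ⁿ⁾ = x·(γ⁽ⁿ⁾)² for all n ≥ 0. -/
open Polynomial

noncomputable def gam : ℕ → Polynomial (ZMod 2)
  | 0 => 0
  | 1 => 1
  | (k + 2) => Polynomial.X * gam (k + 1) + gam k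

lemma two_eq_zero' : (2 : Polynomial (ZMod 2)) = 0 := by
  exact CharTwo.two_eq_zero

lemma gam_aux (n : ℕ) :
    gam (2 * n) = Polynomial.X * (gam n) ^ 2 ∧
    gam (2 * n + 1) = (gam n) ^ 2 + (gam (n + 1)) ^ 2 := by
  induction n with
  | zero => simp [gam]
  | succ k ih =>
    obtain ⟨h1, h2⟩ := ih
    have e1 : 2 * (k + 1) = (2 * k) + 2 := by ring
    have e2 : 2 * (k + 1) + 1 = (2 * k + 1) + 2 := by ring
    have h3 : gam (2 * (k + 1)) = Polynomial.X * (gam (k + 1)) ^ 2 := by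
      rw [e1, gam, h2, h1]
      linear_combination (Polynomial.X * (gam k) ^ 2) * two_eq_zero'
    refine ⟨h3, ?_⟩
    rw [e2, gam, h2, show (2 * k + 1 + 1) = 2 * (k + 1) by ring, h3,
      show k + 1 + 1 = k + 2 from rfl, gam]
    linear_combination (-(Polynomial.X * gam (k + 1) * gam k)) * two_eq_zero'

theorem gam_two_mul (n : ℕ) :
    gam (2 * n) = Polynomial.X * (gam n) ^ 2 := by
  exact (gam_aux n).1
end

section
/- With γ⁽ᵏ⁾ ∈ 𝔽₂[x] defined by γ⁽⁰⁾ = 0, γ⁽¹⁾ = 1, γ⁽ᵏ⁾ = x·γ⁽ᵏ⁻¹⁾ + γ⁽ᵏ⁻²⁾, we have γ^(2^k) = x^(2^k − 1) for all k ≥ 0. -/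
open Polynomial

lemma gam_add : ∀ n m : ℕ, gam (m + n + 1) = gam (m+1) * gam (n+1) + gam m * gam n
  | 0, m => by simp [gam]
  | 1, m => by
      show gam (m + 2) = _
      simp only [gam]
      ring
  | (n+2), m => by
      have h1 := gam_add (n+1) m
      have h2 := gam_add n m
      have e1 : m + (n + 2) + 1 = (m + n + 1) + 2 := by ring
      rw [e1, show gam ((m+n+1)+2) = Polynomial.X * gam (m+n+2) + gam (m+n+1) from rfl]
      rw [show m + n + 2 = m + (n+1) + 1 from by ring] at *
      rw [h1, h2]
      rw [show gam (n+1+1+1) = Polynomial.X * gam (n+2) + gam (n+1) from rfl,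
          show gam (n+2) = Polynomial.X * gam (n+1) + gam n from rfl]
      ring

lemma gam_double (n : ℕ) : gam (2 * (n + 1)) = Polynomial.X * gam (n + 1) ^ 2 := by
  have h := gam_add (n + 1) n
  rw [show n + (n+1) + 1 = 2 * (n+1) from by ring] at h
  rw [h, show gam (n+1+1) = Polynomial.X * gam (n+1) + gam n from rfl]
  have h2 : (2 : Polynomial (ZMod 2)) = 0 := CharTwo.two_eq_zero
  ring_nf
  rw [show gam (1+n) * gam n * 2 = gam (1+n) * gam n * (2:Polynomial (ZMod 2)) from by ring, h2]
  ring

theorem gam_two_pow (k : ℕ) :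
    gam (2 ^ k) = Polynomial.X ^ (2 ^ k - 1) := by
  induction k with
  | zero => simp [gam]
  | succ k ih =>
      obtain ⟨n, hn⟩ : ∃ n, 2 ^ k = n + 1 := ⟨2 ^ k - 1, by have := Nat.one_le_two_pow (n := k); omega⟩
      have : gam (2 ^ (k+1)) = Polynomial.X * gam (2 ^ k) ^ 2 := by
        rw [pow_succ, mul_comm, hn]; exact gam_double n
      rw [this, ih, ← pow_mul, ← pow_succ']
      congr 1
      have := Nat.one_le_two_pow (n := k)
      omega
end

section
/- Let q be a prime power. The number of sequences s = (s₁,…,s_n) ∈ 𝔽_qⁿ with a perfect linear complexity profile, i.e. LC(s₁,…,s_j) = ⌊(j+1)/2⌋ for all 1 ≤ j ≤ n, equals (q−1)^⌈n/2⌉ · q^⌊n/2⌋. -/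
open Polynomial

/-- `f` is an annihilator (characteristic polynomial) of the first `n` terms of `s`
(indexed from 1). -/
def IsAnnihilator {D : Type*} [CommRing D] (s : ℕ → D) (n : ℕ) (f : Polynomial D) : Prop :=
  f = 0 ∨ ∀ j, f.natDegree + 1 ≤ j → j ≤ n →
    ∑ k ∈ Finset.range (f.natDegree + 1), f.coeff k * s (j - f.natDegree + k) = 0

/-- The linear complexity of the first `n` terms of `s`. -/
noncomputable def LC {D : Type*} [CommRing D] (s : ℕ → D) (n : ℕ) : ℕ :=
  sInf {d : ℕ | ∃ f : Polynomial D, f ≠ 0 ∧ IsAnnihilator s n f ∧ f.natDegree = d}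

/-- Extend a finite sequence `v : Fin n → F` (1-indexed as a sequence) to `ℕ → F`. -/
def extSeq {F : Type*} [Zero F] {n : ℕ} (v : Fin n → F) : ℕ → F :=
  fun j => if h : j - 1 < n then v ⟨j - 1, h⟩ else 0

section Aux

variable {F : Type*} [Field F]

/-- The t×t Hankel matrix of s (1-indexed): entry (i,j) = s (i+j+1). -/
def hankelM (s : ℕ → F) (t : ℕ) : Matrix (Fin t) (Fin t) F :=
  fun i j => s (i.1 + j.1 + 1)

lemma LC_le {s : ℕ → F} {n : ℕ} {f : Polynomial F} (hf : f ≠ 0)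
    (h : IsAnnihilator s n f) : LC s n ≤ f.natDegree :=
  Nat.sInf_le ⟨f, hf, h, rfl⟩

lemma LC_set_nonempty (s : ℕ → F) (n : ℕ) :
    {d : ℕ | ∃ f : Polynomial F, f ≠ 0 ∧ IsAnnihilator s n f ∧ f.natDegree = d}.Nonempty := by
  refine ⟨n, X ^ n, pow_ne_zero n X_ne_zero, Or.inr fun j hj1 hj2 => absurd (hj1.trans hj2) ?_,
    natDegree_X_pow n⟩
  rw [natDegree_X_pow]; omega

lemma LC_ge {s : ℕ → F} {n t : ℕ}
    (h : ∀ f : Polynomial F, f ≠ 0 → IsAnnihilator s n f → t ≤ f.natDegree) :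
    t ≤ LC s n := by
  obtain ⟨g, hg, hag, hdg⟩ := Nat.sInf_mem (LC_set_nonempty s n)
  rw [LC, ← hdg]; exact h g hg hag

lemma LC_ge_of_det {s : ℕ → F} {t n : ℕ} (hn : 2 * t ≤ n + 1)
    (hdet : (hankelM s t).det ≠ 0) : t ≤ LC s n := by
  apply LC_ge
  intro f hf ha
  by_contra hlt
  push_neg at hlt
  have ha' := ha.resolve_left hf
  apply hdet
  rw [← Matrix.exists_mulVec_eq_zero_iff]
  refine ⟨fun k => f.coeff k.1, ?_, ?_⟩
  · intro h0
    have : f.coeff f.natDegree = 0 := congrFun h0 ⟨f.natDegree, hlt⟩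
    exact Polynomial.leadingCoeff_ne_zero.mpr hf (by rwa [Polynomial.leadingCoeff])
  · funext i
    have key := ha' (i.1 + 1 + f.natDegree) (by omega) (by omega)
    simp only [Matrix.mulVec, dotProduct, Pi.zero_apply, hankelM]
    rw [Fin.sum_univ_eq_sum_range (fun j => s (i.1 + j + 1) * f.coeff j) t]
    rw [← Finset.sum_subset (Finset.range_subset_range.mpr hlt)
      (fun k hk1 hk2 => by
        rw [Polynomial.coeff_eq_zero_of_natDegree_lt
          (by simp only [Finset.mem_range] at hk1 hk2; omega), mul_zero])]
    rw [← key]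
    apply Finset.sum_congr rfl
    intro k hk
    rw [mul_comm]
    have : i.1 + 1 + f.natDegree - f.natDegree + k = i.1 + k + 1 := by omega
    rw [this]

lemma coeff_sum_C_mul_X_pow (c : ℕ → F) (t m : ℕ) :
    (∑ k ∈ Finset.range t, C (c k) * X ^ k).coeff m = if m < t then c m else 0 := by
  rw [Polynomial.finset_sum_coeff]
  simp only [Polynomial.coeff_C_mul, Polynomial.coeff_X_pow, mul_ite, mul_one, mul_zero]
  rw [Finset.sum_ite_eq]
  simp [Finset.mem_range]

lemma IsAnnihilator.mono {s : ℕ → F} {m n : ℕ} {f : Polynomial F}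
    (h : IsAnnihilator s n f) (hmn : m ≤ n) : IsAnnihilator s m f := by
  rcases h with h | h
  · exact Or.inl h
  · exact Or.inr fun j hj1 hj2 => h j hj1 (hj2.trans hmn)

lemma exists_annihilator_of_det {s : ℕ → F} {t : ℕ} (hdet : (hankelM s t).det ≠ 0) :
    ∃ f : Polynomial F, f ≠ 0 ∧ f.natDegree = t ∧ IsAnnihilator s (2 * t) f := by
  classical
  obtain ⟨y, hMy⟩ : ∃ y, (hankelM s t).mulVec y = (fun i => s (t + 1 + i.1)) :=
    ⟨(hankelM s t)⁻¹.mulVec (fun i => s (t + 1 + i.1)), by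
      rw [Matrix.mulVec_mulVec, Matrix.mul_nonsing_inv _ (isUnit_iff_ne_zero.mpr hdet),
        Matrix.one_mulVec]⟩
  set y' : ℕ → F := fun k => if h : k < t then y ⟨k, h⟩ else 0 with hy'
  set f : Polynomial F := X ^ t - ∑ k ∈ Finset.range t, C (y' k) * X ^ k with hf
  have hcoeff : ∀ m, f.coeff m = (if m = t then 1 else 0) - (if m < t then y' m else 0) := by
    intro m
    rw [hf, Polynomial.coeff_sub, Polynomial.coeff_X_pow, coeff_sum_C_mul_X_pow]
  have hct : f.coeff t = 1 := by rw [hcoeff]; simp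
  have hfne : f ≠ 0 := fun h => by simp [h] at hct
  have hdeg : f.natDegree = t := by
    apply le_antisymm
    · rw [Polynomial.natDegree_le_iff_coeff_eq_zero]
      intro m hm
      rw [hcoeff, if_neg (by omega), if_neg (by omega), sub_zero]
    · exact Polynomial.le_natDegree_of_ne_zero (by rw [hct]; exact one_ne_zero)
  refine ⟨f, hfne, hdeg, Or.inr fun j hj1 hj2 => ?_⟩
  rw [hdeg] at hj1 ⊢
  have hit : j - t - 1 < t := by omega
  have hMyi := congrFun hMy ⟨j - t - 1, hit⟩
  simp only [Matrix.mulVec, dotProduct, hankelM] at hMyi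
  have hyy : ∀ x : Fin t, y' x.1 = y x := fun x => by simp [hy', x.2]
  simp_rw [← hyy] at hMyi
  rw [Fin.sum_univ_eq_sum_range (fun k => s (j - t - 1 + k + 1) * y' k) t] at hMyi
  have e2 : t + 1 + (j - t - 1) = j := by omega
  rw [e2] at hMyi
  rw [Finset.sum_range_succ]
  have hS : ∀ k ∈ Finset.range t,
      f.coeff k * s (j - t + k) = -(s (j - t - 1 + k + 1) * y' k) := by
    intro k hk
    rw [Finset.mem_range] at hk
    rw [hcoeff, if_neg (by omega), if_pos hk, zero_sub]
    have : j - t + k = j - t - 1 + k + 1 := by omega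
    rw [this]; ring
  rw [Finset.sum_congr rfl hS, Finset.sum_neg_distrib, hMyi, hct]
  have e1 : j - t + t = j := by omega
  rw [e1]; ring

lemma LC_le_of_det {s : ℕ → F} {t n : ℕ} (hn : n ≤ 2 * t)
    (hdet : (hankelM s t).det ≠ 0) : LC s n ≤ t := by
  obtain ⟨f, hfne, hdeg, ha⟩ := exists_annihilator_of_det hdet
  exact hdeg ▸ LC_le hfne (ha.mono hn)

lemma det_ne_zero_of_plcp {s : ℕ → F} {n t : ℕ} (ht : 1 ≤ t) (htn : 2 * t ≤ n + 1)
    (hplcp : ∀ j, 1 ≤ j → j ≤ n → LC s j = (j + 1) / 2) :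
    (hankelM s t).det ≠ 0 := by
  classical
  intro hdet
  obtain ⟨v, hv0, hMv⟩ := (Matrix.exists_mulVec_eq_zero_iff).mpr hdet
  set v' : ℕ → F := fun k => if h : k < t then v ⟨k, h⟩ else 0 with hv'
  set f : Polynomial F := ∑ k ∈ Finset.range t, C (v' k) * X ^ k with hf
  have hcoeff : ∀ m, f.coeff m = v' m := by
    intro m
    rw [hf, coeff_sum_C_mul_X_pow, hv']
    by_cases h : m < t <;> simp [h]
  have hfne : f ≠ 0 := by
    intro h0
    obtain ⟨k, hk⟩ := Function.ne_iff.mp hv0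
    apply hk
    have h2 : v' k.1 = 0 := by rw [← hcoeff, h0, Polynomial.coeff_zero]
    rw [hv'] at h2
    simpa [k.2] using h2
  have hdlt : f.natDegree < t := by
    have h3 : f.natDegree ≤ t - 1 := by
      rw [Polynomial.natDegree_le_iff_coeff_eq_zero]
      intro m hm
      rw [hcoeff, hv']
      simp only [dite_eq_right_iff]
      intro h
      exact absurd h (by omega)
    omega
  have hann : IsAnnihilator s (t + f.natDegree) f := by
    refine Or.inr fun j hj1 hj2 => ?_
    have hit : j - f.natDegree - 1 < t := by omega
    have hMvi := congrFun hMv ⟨j - f.natDegree - 1, hit⟩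
    simp only [Matrix.mulVec, dotProduct, hankelM, Pi.zero_apply] at hMvi
    have hvv : ∀ x : Fin t, v' x.1 = v x := fun x => by simp [hv', x.2]
    simp_rw [← hvv] at hMvi
    rw [Fin.sum_univ_eq_sum_range
      (fun k => s (j - f.natDegree - 1 + k + 1) * v' k) t] at hMvi
    rw [Finset.sum_subset (Finset.range_subset_range.mpr (by omega : f.natDegree + 1 ≤ t))
      (fun k hk1 hk2 => by
        rw [Polynomial.coeff_eq_zero_of_natDegree_lt
          (by simp only [Finset.mem_range] at hk2; omega), zero_mul])]
    rw [← hMvi]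
    apply Finset.sum_congr rfl
    intro k hk
    rw [hcoeff, mul_comm]
    have : j - f.natDegree + k = j - f.natDegree - 1 + k + 1 := by omega
    rw [this]
  have hle : LC s (t + f.natDegree) ≤ f.natDegree := LC_le hfne hann
  have := hplcp (t + f.natDegree) (by omega) (by omega)
  omega

theorem plcp_iff_hankel {s : ℕ → F} {n : ℕ} :
    (∀ j, 1 ≤ j → j ≤ n → LC s j = (j + 1) / 2) ↔
    (∀ t, 1 ≤ t → 2 * t ≤ n + 1 → (hankelM s t).det ≠ 0) := by
  constructor
  · exact fun h t ht htn => det_ne_zero_of_plcp ht htn h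
  · intro h j hj1 hj2
    have hdet := h ((j + 1) / 2) (by omega) (by omega)
    exact le_antisymm (LC_le_of_det (by omega) hdet) (LC_ge_of_det (by omega) hdet)

lemma hankelM_congr {s s' : ℕ → F} {t : ℕ}
    (h : ∀ k, 1 ≤ k → k ≤ 2 * t - 1 → s k = s' k) :
    hankelM s t = hankelM s' t := by
  ext i j
  have hi := i.2
  have hj := j.2
  exact h _ (by omega) (by omega)

lemma det_hankelM_succ (s : ℕ → F) (t : ℕ) :
    (hankelM s (t + 1)).det
      = s (2 * t + 1) * (hankelM s t).det
        + (hankelM (Function.update s (2 * t + 1) 0) (t + 1)).det := by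
  classical
  set s0 := Function.update s (2 * t + 1) 0 with hs0
  have hs0k : ∀ k, k ≠ 2 * t + 1 → s0 k = s k := fun k hk => Function.update_of_ne hk _ _
  have hs0c : s0 (2 * t + 1) = 0 := Function.update_self _ _ _
  set M0 := hankelM s0 (t + 1) with hM0
  set w : Fin (t + 1) → F := fun j => if j = Fin.last t then s (2 * t + 1) else 0 with hw
  have hM : hankelM s (t + 1) = Matrix.updateRow M0 (Fin.last t) (M0 (Fin.last t) + w) := by
    ext i j
    by_cases hi : i = Fin.last t
    · subst hi
      rw [Matrix.updateRow_self]
      by_cases hj : j = Fin.last t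
      · subst hj
        simp only [Pi.add_apply, hw, if_pos rfl, hM0, hankelM, Fin.val_last]
        have e : t + t + 1 = 2 * t + 1 := by omega
        rw [e, hs0c, zero_add]
        rfl
      · simp only [Pi.add_apply, hw, if_neg hj, add_zero, hM0, hankelM, Fin.val_last]
        have hjt : j.1 ≠ t := fun h => hj (Fin.ext h)
        have hj2 := j.2
        exact (hs0k _ (by omega)).symm
    · rw [Matrix.updateRow_ne hi]
      show s _ = s0 _
      have hit : i.1 ≠ t := fun h => hi (Fin.ext h)
      have hi2 := i.2
      have hj2 := j.2
      exact (hs0k _ (by omega)).symm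
  rw [hM, Matrix.det_updateRow_add, Matrix.updateRow_eq_self, add_comm]
  congr 1
  -- goal : (M0.updateRow (Fin.last t) w).det = s (2 * t + 1) * (hankelM s t).det
  rw [Matrix.det_succ_row _ (Fin.last t)]
  rw [Finset.sum_eq_single (Fin.last t)]
  · have hsub : (M0.updateRow (Fin.last t) w).submatrix
        (Fin.last t).succAbove (Fin.last t).succAbove = hankelM s t := by
      ext i j
      simp only [Matrix.submatrix_apply, Fin.succAbove_last]
      rw [Matrix.updateRow_ne (Fin.castSucc_lt_last i).ne]
      show s0 _ = s _
      have hi2 := i.2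
      have hj2 := j.2
      exact hs0k _ (by simp only [Fin.coe_castSucc]; omega)
    have hsign : (-1 : F) ^ (↑(Fin.last t) + ↑(Fin.last t) : ℕ) = 1 :=
      Even.neg_one_pow ⟨t, by simp [Fin.val_last]⟩
    rw [hsub, hsign, one_mul, Matrix.updateRow_self, hw]
    simp
  · intro b _ hb
    simp only [Matrix.updateRow_self, hw, if_neg hb, mul_zero, zero_mul]
  · intro h
    exact absurd (Finset.mem_univ _) h

lemma extSeq_snoc_eq {n : ℕ} (u : Fin n → F) (x : F) {k : ℕ} (hk1 : 1 ≤ k) (hk2 : k ≤ n) :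
    extSeq (Fin.snoc u x) k = extSeq u k := by
  have h1 : k - 1 < n := by omega
  have h2 : k - 1 < n + 1 := by omega
  rw [extSeq, extSeq, dif_pos h1, dif_pos h2]
  have : (⟨k - 1, h2⟩ : Fin (n + 1)) = Fin.castSucc ⟨k - 1, h1⟩ := rfl
  rw [this, Fin.snoc_castSucc]

lemma extSeq_snoc_last {n : ℕ} (u : Fin n → F) (x : F) :
    extSeq (Fin.snoc u x) (n + 1) = x := by
  have h2 : n + 1 - 1 < n + 1 := by omega
  rw [extSeq, dif_pos h2]
  have : (⟨n + 1 - 1, h2⟩ : Fin (n + 1)) = Fin.last n := by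
    apply Fin.ext; simp
  rw [this, Fin.snoc_last]

def GoodP (n : ℕ) (v : Fin n → F) : Prop :=
  ∀ t, 1 ≤ t → 2 * t ≤ n + 1 → (hankelM (extSeq v) t).det ≠ 0

lemma goodP_snoc_of_goodP {n : ℕ} {u : Fin n → F} (hu : GoodP n u) (x : F) (t : ℕ)
    (ht : 1 ≤ t) (htn : 2 * t ≤ n + 1) :
    (hankelM (extSeq (Fin.snoc u x)) t).det ≠ 0 := by
  rw [hankelM_congr (fun k hk1 hk2 => extSeq_snoc_eq u x hk1 (by omega))]
  exact hu t ht htn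

lemma goodP_init {n : ℕ} {v : Fin (n + 1) → F} (hv : GoodP (n + 1) v) :
    GoodP n (Fin.init v) := by
  intro t ht htn
  have h2 : (hankelM (extSeq v) t).det ≠ 0 := hv t ht (by omega)
  rw [← Fin.snoc_init_self v] at h2
  rwa [hankelM_congr (fun k hk1 hk2 =>
    (extSeq_snoc_eq (Fin.init v) (v (Fin.last n)) hk1 (by omega)).symm)]

/-- The sigma decomposition of good sequences of length `n+1`. -/
noncomputable def goodEquiv (n : ℕ) :
    {v : Fin (n + 1) → F // GoodP (n + 1) v} ≃
      Σ u : {u : Fin n → F // GoodP n u}, {x : F // GoodP (n + 1) (Fin.snoc u.1 x)} where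
  toFun v := ⟨⟨Fin.init v.1, goodP_init v.2⟩,
    ⟨v.1 (Fin.last n), by rw [Fin.snoc_init_self]; exact v.2⟩⟩
  invFun p := ⟨Fin.snoc p.1.1 p.2.1, p.2.2⟩
  left_inv v := Subtype.ext (Fin.snoc_init_self v.1)
  right_inv p := by
    obtain ⟨⟨u, hu⟩, ⟨x, hx⟩⟩ := p
    simp only [Sigma.mk.inj_iff]
    have h1 : Fin.init (α := fun _ : Fin (n + 1) => F) (Fin.snoc u x) = u := funext fun i => by simp
    constructor
    · exact Subtype.ext h1
    · rw [Subtype.heq_iff_coe_eq]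
      · simp
      · intro y
        rw [h1]

lemma goodP_snoc_odd {n : ℕ} (hodd : n % 2 = 1) {u : Fin n → F} (hu : GoodP n u) (x : F) :
    GoodP (n + 1) (Fin.snoc u x) :=
  fun t ht htn => goodP_snoc_of_goodP hu x t ht (by omega)

lemma goodP_snoc_even {m : ℕ} {u : Fin (2 * m) → F} (hu : GoodP (2 * m) u) (x : F) :
    GoodP (2 * m + 1) (Fin.snoc u x) ↔
      x * (hankelM (extSeq u) m).det
        + (hankelM (Function.update (extSeq u) (2 * m + 1) 0) (m + 1)).det ≠ 0 := by
  have hlast : extSeq (Fin.snoc u x) (2 * m + 1) = x := extSeq_snoc_last u x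
  have key : (hankelM (extSeq (Fin.snoc u x)) (m + 1)).det
      = x * (hankelM (extSeq u) m).det
        + (hankelM (Function.update (extSeq u) (2 * m + 1) 0) (m + 1)).det := by
    have h1 : hankelM (extSeq (Fin.snoc u x)) m = hankelM (extSeq u) m :=
      hankelM_congr fun k hk1 hk2 => extSeq_snoc_eq u x hk1 (by omega)
    have h2 : hankelM (Function.update (extSeq (Fin.snoc u x)) (2 * m + 1) 0) (m + 1)
        = hankelM (Function.update (extSeq u) (2 * m + 1) 0) (m + 1) := by
      apply hankelM_congr
      intro k hk1 hk2
      by_cases hk : k = 2 * m + 1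
      · subst hk
        rw [Function.update_self, Function.update_self]
      · rw [Function.update_of_ne hk, Function.update_of_ne hk]
        exact extSeq_snoc_eq u x hk1 (by omega)
    rw [det_hankelM_succ, hlast, h1, h2]
  constructor
  · intro h
    rw [← key]
    exact h (m + 1) (by omega) (by omega)
  · intro hx t ht htn
    by_cases htm : t ≤ m
    · exact goodP_snoc_of_goodP hu x t ht (by omega)
    · have : t = m + 1 := by omega
      subst this
      rw [key]
      exact hx

lemma card_ne_zero [Fintype F] : Nat.card {y : F // y ≠ 0} = Fintype.card F - 1 := by
  classical
  have e : {y : F // y ≠ 0} ≃ {y : F // ¬(y = 0)} := Equiv.refl _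
  rw [Nat.card_congr e, Nat.card_eq_fintype_card]
  rw [Fintype.card_subtype_compl, Fintype.card_subtype_eq]

lemma card_fiber_even [Fintype F] {m : ℕ} {u : Fin (2 * m) → F} (hu : GoodP (2 * m) u) :
    Nat.card {x : F // GoodP (2 * m + 1) (Fin.snoc u x)} = Fintype.card F - 1 := by
  classical
  set D := (hankelM (extSeq u) m).det with hD
  set c := (hankelM (Function.update (extSeq u) (2 * m + 1) 0) (m + 1)).det with hc
  have hDne : D ≠ 0 := by
    rcases Nat.eq_zero_or_pos m with hm | hm
    · subst hm
      rw [hD, Matrix.det_isEmpty]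
      exact one_ne_zero
    · exact hu m hm (by omega)
  have e1 : {x : F // GoodP (2 * m + 1) (Fin.snoc u x)} ≃ {x : F // x * D + c ≠ 0} :=
    Equiv.subtypeEquivRight fun x => goodP_snoc_even hu x
  have e2 : {x : F // x * D + c ≠ 0} ≃ {y : F // y ≠ 0} :=
    Equiv.subtypeEquiv ((Equiv.mulRight₀ D hDne).trans (Equiv.addRight c))
      (fun x => by simp [Equiv.mulRight₀])
  rw [Nat.card_congr (e1.trans e2), card_ne_zero]

lemma step_count [Fintype F] (n : ℕ) :
    Nat.card {v : Fin (n + 1) → F // GoodP (n + 1) v}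
      = Nat.card {u : Fin n → F // GoodP n u}
        * (if n % 2 = 0 then Fintype.card F - 1 else Fintype.card F) := by
  classical
  rw [Nat.card_congr (goodEquiv n), Nat.card_eq_fintype_card, Fintype.card_sigma]
  have key : ∀ u : {u : Fin n → F // GoodP n u},
      Fintype.card {x : F // GoodP (n + 1) (Fin.snoc u.1 x)}
        = (if n % 2 = 0 then Fintype.card F - 1 else Fintype.card F) := by
    intro u
    rcases Nat.even_or_odd n with he | ho
    · obtain ⟨m, hm⟩ := he
      rw [if_pos (by omega)]
      have hm2 : n = 2 * m := by omega
      subst hm2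
      rw [← Nat.card_eq_fintype_card]
      exact card_fiber_even u.2
    · obtain ⟨m, hm⟩ := ho
      rw [if_neg (by omega)]
      exact Fintype.card_congr
        (Equiv.subtypeUnivEquiv (fun x => goodP_snoc_odd (by omega) u.2 x))
  rw [Finset.sum_congr rfl (fun u _ => key u), Finset.sum_const, Finset.card_univ,
    smul_eq_mul, ← Nat.card_eq_fintype_card]

lemma count_good [Fintype F] : ∀ n : ℕ, Nat.card {v : Fin n → F // GoodP n v}
    = (Fintype.card F - 1) ^ ((n + 1) / 2) * Fintype.card F ^ (n / 2)
  | 0 => by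
      have e : {v : Fin 0 → F // GoodP 0 v} ≃ (Fin 0 → F) :=
        Equiv.subtypeUnivEquiv (fun v t ht htn => absurd htn (by omega))
      rw [Nat.card_congr e, Nat.card_eq_fintype_card]
      simp
  | (n + 1) => by
      rw [step_count n, count_good n]
      rcases Nat.even_or_odd n with he | ho
      · obtain ⟨m, hm⟩ := he
        have hm2 : n = 2 * m := by omega
        subst hm2
        rw [if_pos (by omega)]
        have e1 : (2 * m + 1 + 1) / 2 = m + 1 := by omega
        have e2 : (2 * m + 1) / 2 = m := by omega
        have e3 : 2 * m / 2 = m := by omega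
        rw [e1, e2, e3, pow_succ]
        ring
      · obtain ⟨m, hm⟩ := ho
        subst hm
        rw [if_neg (by omega)]
        have e1 : (2 * m + 1 + 1 + 1) / 2 = m + 1 := by omega
        have e2 : (2 * m + 1 + 1) / 2 = m + 1 := by omega
        have e3 : (2 * m + 1) / 2 = m := by omega
        rw [e1, e2, e3, pow_succ]
        ring


end Aux

theorem count_plcp (F : Type*) [Field F] [Fintype F] (n : ℕ) (hn : 1 ≤ n) :
    Nat.card {v : Fin n → F // ∀ j, 1 ≤ j → j ≤ n → LC (extSeq v) j = (j + 1) / 2}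
      = (Fintype.card F - 1) ^ ((n + 1) / 2) * Fintype.card F ^ (n / 2) := by
  rw [Nat.card_congr (Equiv.subtypeEquivRight
    (fun v : Fin n → F => plcp_iff_hankel (s := extSeq v) (n := n)))]
  exact count_good n
end

section
/- Let n ≥ 1 be odd and s ∈ 𝔽₂ⁿ. If s has a perfect linear complexity profile (LC of the length-j prefix equals ⌊(j+1)/2⌋ for 1 ≤ j ≤ n), then s is stable: s₁ = 1 and for every even j with 2 ≤ j ≤ n−1, s_{j+1} = s_j + s_{j/2}. -/
open Polynomial

open Finset


abbrev F2 := ZMod 2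

lemma f2_sq : ∀ x : F2, x ^ 2 = x := by decide

lemma f2_one_of_ne : ∀ x : F2, x ≠ 0 → x = 1 := by decide

lemma coeff_sq (p : F2[X]) (m : ℕ) :
    (p ^ 2).coeff m = if 2 ∣ m then p.coeff (m / 2) else 0 := by
  have h := Polynomial.map_frobenius_expand 2 p
  rw [← h, Polynomial.coeff_map, Polynomial.coeff_expand (by norm_num : 0 < 2)]
  split_ifs <;> simp [frobenius_def, f2_sq]

noncomputable def Sp (s : ℕ → F2) (n : ℕ) : F2[X] :=
  ∑ i ∈ range n, C (s (i + 1)) * X ^ i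

lemma coeff_Sp (s : ℕ → F2) (n q : ℕ) :
    (Sp s n).coeff q = if q < n then s (q + 1) else 0 := by
  rw [Sp, Polynomial.finset_sum_coeff]
  simp only [Polynomial.coeff_C_mul, Polynomial.coeff_X_pow, mul_ite, mul_one, mul_zero]
  simp [Finset.sum_ite_eq' (range n) q (fun i => s (i + 1)), eq_comm]

lemma coeff_mul_Sp (s : ℕ → F2) (n : ℕ) (a : F2[X]) (d q : ℕ)
    (hd : a.natDegree ≤ d) (hq : d ≤ q) (hqn : q < n) :
    (a * Sp s n).coeff q = ∑ k ∈ range (d + 1), a.coeff (d - k) * s (q + 1 - d + k) := by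
  rw [Polynomial.coeff_mul, Finset.Nat.sum_antidiagonal_eq_sum_range_succ_mk]
  have h1 : ∑ l ∈ range (q + 1), a.coeff l * (Sp s n).coeff (q - l)
      = ∑ l ∈ range (q + 1), a.coeff l * s (q + 1 - l) := by
    apply Finset.sum_congr rfl
    intro l hl
    rw [coeff_Sp, if_pos (show q - l < n by omega)]
    have hl' : l ≤ q := Nat.lt_succ_iff.mp (mem_range.mp hl)
    congr 2
    omega
  have h2 : ∑ l ∈ range (q + 1), a.coeff l * s (q + 1 - l)
      = ∑ l ∈ range (d + 1), a.coeff l * s (q + 1 - l) := by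
    refine (Finset.sum_subset (Finset.range_subset_range.2 (by omega)) ?_).symm
    intro l _ hl
    have : d < l := by simpa using hl
    rw [Polynomial.coeff_eq_zero_of_natDegree_lt (by omega), zero_mul]
  rw [h1, h2, ← Finset.sum_range_reflect]
  apply Finset.sum_congr rfl
  intro k hk
  have hk' : k ≤ d := by simpa using Nat.lt_succ_iff.mp (mem_range.mp hk)
  have e1 : d + 1 - 1 - k = d - k := by omega
  have e2 : q + 1 - (d - k) = q + 1 - d + k := by omega
  rw [e1, e2]

lemma coeff_sum_C_mul_X (c : ℕ → F2) (N q : ℕ) :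
    (∑ l ∈ range N, C (c l) * X ^ l).coeff q = if q < N then c q else 0 := by
  rw [Polynomial.finset_sum_coeff]
  simp only [Polynomial.coeff_C_mul, Polynomial.coeff_X_pow, mul_ite, mul_one, mul_zero]
  simp [Finset.sum_ite_eq' (range N) q c, eq_comm]

def Good (s : ℕ → F2) (n d m : ℕ) : Prop :=
  ∃ a : F2[X], a.natDegree ≤ d ∧ a.coeff 0 = 1 ∧
    ∀ q, d ≤ q → q < m → (a * Sp s n).coeff q = 0

lemma annset_nonempty (s : ℕ → F2) (m : ℕ) :
    {d : ℕ | ∃ f : F2[X], f ≠ 0 ∧ IsAnnihilator s m f ∧ f.natDegree = d}.Nonempty := by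
  refine ⟨m, X ^ m, ?_, Or.inr ?_, Polynomial.natDegree_X_pow m⟩
  · exact pow_ne_zero _ Polynomial.X_ne_zero
  · intro j hj1 hj2
    rw [Polynomial.natDegree_X_pow] at hj1
    omega

lemma good_of_lc (s : ℕ → F2) (n m d : ℕ) (hmn : m ≤ n) (h : LC s m = d) :
    Good s n d m := by
  have hmem : d ∈ {d : ℕ | ∃ f : F2[X], f ≠ 0 ∧ IsAnnihilator s m f ∧ f.natDegree = d} := by
    rw [← h]; exact Nat.sInf_mem (annset_nonempty s m)
  obtain ⟨f, hf0, hann, hdeg⟩ := hmem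
  refine ⟨∑ l ∈ range (d + 1), C (f.coeff (d - l)) * X ^ l, ?_, ?_, ?_⟩
  · rw [Polynomial.natDegree_le_iff_coeff_eq_zero]
    intro N hN
    rw [coeff_sum_C_mul_X, if_neg (by omega)]
  · rw [coeff_sum_C_mul_X, if_pos (by omega)]
    have : f.coeff d ≠ 0 := by
      rw [← hdeg]
      exact Polynomial.leadingCoeff_ne_zero.mpr hf0
    simpa using f2_one_of_ne _ this
  · intro q hq hqm
    rw [coeff_mul_Sp s n _ d q ?_ hq (by omega)]
    · have step : ∀ k ∈ range (d + 1),
          (∑ l ∈ range (d + 1), C (f.coeff (d - l)) * X ^ l).coeff (d - k) * s (q + 1 - d + k)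
          = f.coeff k * s (q + 1 - d + k) := by
        intro k hk
        have hk' : k ≤ d := Nat.lt_succ_iff.mp (mem_range.mp hk)
        rw [coeff_sum_C_mul_X, if_pos (by omega)]
        congr 2
        omega
      rw [Finset.sum_congr rfl step]
      rcases hann with h0 | hrec
      · exact absurd h0 hf0
      · have := hrec (q + 1) (by omega) (by omega)
        rw [hdeg] at this
        exact this
    · rw [Polynomial.natDegree_le_iff_coeff_eq_zero]
      intro N hN
      rw [coeff_sum_C_mul_X, if_neg (by omega)]

lemma lc_le_of_good (s : ℕ → F2) (n m d : ℕ) (hmn : m ≤ n) (h : Good s n d m) :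
    LC s m ≤ d := by
  obtain ⟨a, hadeg, ha0, hz⟩ := h
  set f : F2[X] := ∑ k ∈ range (d + 1), C (a.coeff (d - k)) * X ^ k with hfdef
  have hcoef : ∀ k, f.coeff k = if k < d + 1 then a.coeff (d - k) else 0 := fun k =>
    coeff_sum_C_mul_X _ _ _
  have hfd : f.coeff d = 1 := by rw [hcoef, if_pos (by omega)]; simpa using ha0
  have hf0 : f ≠ 0 := fun hc => by simp [hc] at hfd
  have hdeg : f.natDegree = d := by
    refine le_antisymm ?_ (Polynomial.le_natDegree_of_ne_zero (by rw [hfd]; exact one_ne_zero))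
    rw [Polynomial.natDegree_le_iff_coeff_eq_zero]
    intro N hN
    rw [hcoef, if_neg (by omega)]
  apply Nat.sInf_le
  refine ⟨f, hf0, Or.inr ?_, hdeg⟩
  simp only [hdeg]
  intro j hj1 hj2
  have key : ∑ k ∈ range (d + 1), f.coeff k * s (j - d + k)
      = (a * Sp s n).coeff (j - 1) := by
    rw [coeff_mul_Sp s n a d (j - 1) hadeg (by omega) (by omega)]
    apply Finset.sum_congr rfl
    intro k hk
    have hk' : k ≤ d := Nat.lt_succ_iff.mp (mem_range.mp hk)
    rw [hcoef, if_pos (by omega)]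
    congr 2
    omega
  rw [key, hz (j - 1) (by omega) (by omega)]

lemma f2_zero_of_ne : ∀ x : F2, x ≠ 1 → x = 0 := by decide
lemma f2_final : ∀ x α β : F2, ¬(α = 0 ∧ β = 0) → x + α = β + α * β + 1 → x = 0 := by decide
lemma f2_solve : ∀ x y z : F2, x + y + z = 0 → z = y + x := by decide

theorem plcp_stable (n : ℕ) (hn : 1 ≤ n) (hodd : Odd n) (s : ℕ → ZMod 2)
    (hplcp : ∀ j, 1 ≤ j → j ≤ n → LC s j = (j + 1) / 2) :
    s 1 = 1 ∧ ∀ j, 2 ≤ j → j ≤ n - 1 → Even j → s (j + 1) = s j + s (j / 2) := by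
  have hs1 : s 1 = 1 := by
    by_contra hne
    have hs0 : s 1 = 0 := f2_zero_of_ne _ hne
    have hle : LC s 1 ≤ 0 := by
      refine lc_le_of_good s n 1 0 hn ⟨1, by simp, by simp, ?_⟩
      intro q _ hq
      have hq0 : q = 0 := by omega
      subst hq0
      rw [one_mul, coeff_Sp, if_pos (show 0 < n by omega)]
      simpa using hs0
    have h1 : LC s 1 = 1 := by simpa using hplcp 1 le_rfl hn
    omega
  set T : F2[X] := (Sp s n) ^ 2 * X ^ 2 + (Sp s n) * X ^ 1 + Sp s n with hTdef
  have hT0 : T.coeff 0 = 1 := by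
    rw [hTdef]
    simp only [Polynomial.coeff_add, Polynomial.coeff_mul_X_pow']
    norm_num
    rw [coeff_Sp, if_pos (show 0 < n by omega)]
    simpa using hs1
  have hTc : ∀ t, 1 ≤ t → 2 * t < n →
      T.coeff (2 * t) = s t + s (2 * t) + s (2 * t + 1) := by
    intro t ht htn
    rw [hTdef]
    simp only [Polynomial.coeff_add, Polynomial.coeff_mul_X_pow']
    rw [if_pos (by omega : 2 ≤ 2 * t), if_pos (by omega : 1 ≤ 2 * t)]
    rw [coeff_sq, if_pos (by omega : 2 ∣ 2 * t - 2)]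
    rw [coeff_Sp, if_pos (by omega : (2 * t - 2) / 2 < n)]
    rw [coeff_Sp, if_pos (by omega : 2 * t - 1 < n)]
    rw [coeff_Sp, if_pos (by omega : 2 * t < n)]
    have e1 : (2 * t - 2) / 2 + 1 = t := by omega
    have e2 : 2 * t - 1 + 1 = 2 * t := by omega
    rw [e1, e2]
  have main : ∀ t, 1 ≤ t → 2 * t + 1 ≤ n → T.coeff (2 * t) = 0 := by
    intro t
    induction t using Nat.strong_induction_on with
    | _ t IH =>
    intro ht1 htn
    have h2t : LC s (2 * t) = t := by
      have := hplcp (2 * t) (by omega) (by omega)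
      rw [this]; omega
    have h2t1 : LC s (2 * t + 1) = t + 1 := by
      have := hplcp (2 * t + 1) (by omega) (by omega)
      rw [this]; omega
    obtain ⟨a, hadeg, ha0, hz⟩ := good_of_lc s n (2 * t) t (by omega) h2t
    set u : F2[X] := a * Sp s n with hu
    have hδ : u.coeff (2 * t) = 1 := by
      apply f2_one_of_ne
      intro h0
      have hle : LC s (2 * t + 1) ≤ t := by
        refine lc_le_of_good s n (2 * t + 1) t (by omega) ⟨a, hadeg, ha0, ?_⟩
        intro q hq hq'
        rcases Nat.lt_or_ge q (2 * t) with h | h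
        · exact hz q hq h
        · have : q = 2 * t := by omega
          rw [this]; exact h0
      omega
    set α := a.coeff t with hα
    set β := u.coeff (t - 1) with hβ
    have hαβ : ¬(α = 0 ∧ β = 0) := by
      rintro ⟨hα0, hβ0⟩
      have hle : LC s (2 * t) ≤ t - 1 := by
        refine lc_le_of_good s n (2 * t) (t - 1) (by omega) ⟨a, ?_, ha0, ?_⟩
        · rw [Polynomial.natDegree_le_iff_coeff_eq_zero]
          intro N hN
          rcases Nat.lt_or_ge t N with h | h
          · exact Polynomial.coeff_eq_zero_of_natDegree_lt (by omega)
          · have : N = t := by omega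
            rw [this, ← hα]; exact hα0
        · intro q hq hq'
          rcases Nat.lt_or_ge q t with h | h
          · have : q = t - 1 := by omega
            rw [this, ← hu, ← hβ]; exact hβ0
          · exact hz q h hq'
      omega
    -- Way 1
    have w1 : (a ^ 2 * T).coeff (2 * t) = T.coeff (2 * t) + α := by
      rw [Polynomial.coeff_mul, Finset.Nat.sum_antidiagonal_eq_sum_range_succ_mk]
      have hsub : ({0, 2 * t} : Finset ℕ) ⊆ range (2 * t + 1) := by
        intro x hx
        simp only [Finset.mem_insert, Finset.mem_singleton] at hx
        rcases hx with h | h <;> simp [h] <;> omega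
      rw [← Finset.sum_subset hsub ?vanish]
      case vanish =>
        intro i hi hni
        simp only [Finset.mem_insert, Finset.mem_singleton, not_or] at hni
        have hir : i < 2 * t + 1 := mem_range.mp hi
        rcases Nat.even_or_odd i with ⟨k, hk⟩ | hoddi
        · have hk1 : 1 ≤ k := by omega
          have hk2 : k < t := by omega
          have : 2 * t - i = 2 * (t - k) := by omega
          rw [this, IH (t - k) (by omega) (by omega) (by omega), mul_zero]
        · rw [coeff_sq, if_neg (by rcases hoddi with ⟨k, hk⟩; omega), zero_mul]
      rw [Finset.sum_pair (by omega : (0 : ℕ) ≠ 2 * t)]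
      rw [Nat.sub_zero, Nat.sub_self]
      rw [coeff_sq, if_pos (by omega : 2 ∣ 0), coeff_sq, if_pos (by omega : 2 ∣ 2 * t)]
      have e0 : (0 : ℕ) / 2 = 0 := by omega
      have et : 2 * t / 2 = t := by omega
      rw [e0, et, ha0, hT0, one_mul, mul_one]
    -- Way 2
    have hATpoly : a ^ 2 * T = u ^ 2 * X ^ 2 + (a * u) * X ^ 1 + a * u := by
      rw [hTdef, hu]; ring
    have hau2t : (a * u).coeff (2 * t) = 1 := by
      rw [Polynomial.coeff_mul, Finset.Nat.sum_antidiagonal_eq_sum_range_succ_mk]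
      rw [Finset.sum_eq_single_of_mem 0 (by simp)]
      · rw [Nat.sub_zero, ha0, hδ, one_mul]
      · intro i hi hni
        rcases Nat.lt_or_ge t i with h | h
        · rw [Polynomial.coeff_eq_zero_of_natDegree_lt (by omega), zero_mul]
        · rw [hz (2 * t - i) (by omega) (by omega), mul_zero]
    have hau2t1 : (a * u).coeff (2 * t - 1) = α * β := by
      rw [Polynomial.coeff_mul, Finset.Nat.sum_antidiagonal_eq_sum_range_succ_mk]
      rw [Finset.sum_eq_single_of_mem t (by simp [Finset.mem_range]; omega)]
      · have e : 2 * t - 1 - t = t - 1 := by omega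
        show a.coeff t * u.coeff (2 * t - 1 - t) = α * β
        rw [e, hα, hβ]
      · intro i hi hni
        rcases Nat.lt_or_ge t i with h | h
        · rw [Polynomial.coeff_eq_zero_of_natDegree_lt (by omega), zero_mul]
        · have h' : i < t := by omega
          rw [hz (2 * t - 1 - i) (by omega) (by omega), mul_zero]
    have w2 : (a ^ 2 * T).coeff (2 * t) = β + α * β + 1 := by
      rw [hATpoly]
      simp only [Polynomial.coeff_add, Polynomial.coeff_mul_X_pow']
      rw [if_pos (by omega : 2 ≤ 2 * t), if_pos (by omega : 1 ≤ 2 * t)]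
      rw [coeff_sq, if_pos (by omega : 2 ∣ 2 * t - 2)]
      have e1 : (2 * t - 2) / 2 = t - 1 := by omega
      rw [e1, ← hβ, hau2t1, hau2t]
    exact f2_final _ _ _ hαβ (w1.symm.trans w2)
  refine ⟨hs1, ?_⟩
  intro j hj2 hjn hev
  obtain ⟨t, ht⟩ := hev
  have hjt : j = 2 * t := by omega
  have hdiv : j / 2 = t := by omega
  have hTz := main t (by omega) (by omega)
  have hTv := hTc t (by omega) (by omega)
  rw [hTz] at hTv
  rw [hjt, show 2 * t / 2 = t by omega]
  exact f2_solve _ _ _ hTv.symm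
end

section
/- Let n ≥ 1 be odd and s ∈ 𝔽₂ⁿ. Then s has a perfect linear complexity profile if and only if s is stable, i.e. s₁ = 1 and s_{j+1} = s_j + s_{j/2} for all even j with 2 ≤ j ≤ n−1. (Theorem of Wang and Massey.) -/
open Polynomial

namespace PLCPaux

open Finset

abbrev F := ZMod 2

lemma Fms : ∀ x : F, x * x = x := by decide
lemma Fas : ∀ x : F, x + x = 0 := by decide
lemma Fnz : ∀ x : F, x ≠ 0 → x = 1 := by decide
lemma Fn1 : ∀ x : F, x ≠ 1 → x = 0 := by decide

def Ann (s : ℕ → F) (m d : ℕ) (c : ℕ → F) : Prop :=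
  ∀ i, 1 ≤ i → i + d ≤ m → ∑ k ∈ range (d+1), c k * s (i+k) = 0

def Good (s : ℕ → F) (m d : ℕ) : Prop := ∃ c, c d = 1 ∧ Ann s m d c

lemma Ann_mono {s m m' d c} (h : m' ≤ m) (hc : Ann s m d c) : Ann s m' d c :=
  fun i hi him => hc i hi (le_trans him h)

lemma good_iff (s : ℕ → F) (m d : ℕ) :
    (∃ f : Polynomial F, f ≠ 0 ∧ IsAnnihilator s m f ∧ f.natDegree = d) ↔ Good s m d := by
  constructor
  · rintro ⟨f, hf0, hf, hdeg⟩
    rcases hf with h | h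
    · exact absurd h hf0
    refine ⟨f.coeff, ?_, fun i hi him => ?_⟩
    · have := Polynomial.leadingCoeff_ne_zero.mpr hf0
      rw [Polynomial.leadingCoeff, hdeg] at this
      exact Fnz _ this
    · have h2 := h (i + d) (by omega) (by omega)
      rw [hdeg] at h2
      simpa using h2
  · rintro ⟨c, hcd, hc⟩
    set f : Polynomial F := ∑ k ∈ range (d+1), Polynomial.monomial k (c k) with hf
    have hcoeff : ∀ m', f.coeff m' = if m' < d + 1 then c m' else 0 := by
      intro m'
      rw [hf, Polynomial.finset_sum_coeff]
      simp only [Polynomial.coeff_monomial]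
      rw [Finset.sum_ite_eq' (range (d+1)) m' c]
      simp [Finset.mem_range]
    have hfd : f.coeff d = 1 := by rw [hcoeff]; simp [hcd]
    have hf0 : f ≠ 0 := fun h => by simp [h] at hfd
    have hdeg : f.natDegree = d := by
      apply le_antisymm
      · rw [Polynomial.natDegree_le_iff_coeff_eq_zero]
        intro m' hm'
        rw [hcoeff]
        simp [Nat.not_lt.mpr hm']
      · exact Polynomial.le_natDegree_of_ne_zero (by rw [hfd]; exact one_ne_zero)
    refine ⟨f, hf0, Or.inr fun j hj1 hj2 => ?_, hdeg⟩
    rw [hdeg] at hj1 ⊢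
    have := hc (j - d) (by omega) (by omega)
    calc ∑ k ∈ range (d+1), f.coeff k * s (j - d + k)
        = ∑ k ∈ range (d+1), c k * s (j - d + k) := by
          refine Finset.sum_congr rfl fun k hk => ?_
          rw [hcoeff]
          simp [Finset.mem_range.mp hk]
      _ = 0 := this

lemma LC_eq (s : ℕ → F) (m : ℕ) : LC s m = sInf {d | Good s m d} := by
  unfold LC
  congr 1
  ext d
  exact good_iff s m d

lemma good_top (s : ℕ → F) (m : ℕ) : Good s m m := by
  refine ⟨fun k => if k = m then 1 else 0, by simp, fun i hi him => ?_⟩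
  exact absurd him (by omega)

lemma LC_le {s : ℕ → F} {m d : ℕ} (h : Good s m d) : LC s m ≤ d := by
  rw [LC_eq]; exact Nat.sInf_le (show d ∈ {d | Good s m d} from h)

lemma le_LC {s : ℕ → F} {m L : ℕ} (h : ∀ d, Good s m d → L ≤ d) : L ≤ LC s m := by
  rw [LC_eq]; exact le_csInf ⟨m, show m ∈ {d | Good s m d} from good_top s m⟩ h

lemma good_LC (s : ℕ → F) (m : ℕ) : Good s m (LC s m) := by
  rw [LC_eq]; exact Nat.sInf_mem ⟨m, show m ∈ {d | Good s m d} from good_top s m⟩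


lemma massey {s : ℕ → F} {d e q : ℕ} {c c' : ℕ → F}
    (hc : Ann s (d+e+q) d c)
    (hδ : ∑ k ∈ range (d+1), c k * s (e+q+1+k) ≠ 0)
    (hce : c' e = 1)
    (hc' : Ann s (d+e+q+1) e c') : False := by
  set S := ∑ l ∈ range (e+1), c' l * ∑ k ∈ range (d+1), c k * s (q+1+l+k) with hS
  have W1 : S = ∑ k ∈ range (d+1), c k * s (e+q+1+k) := by
    rw [hS, Finset.sum_range_succ]
    have h0 : ∀ l ∈ range e, c' l * ∑ k ∈ range (d+1), c k * s (q+1+l+k) = 0 := by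
      intro l hl
      rw [hc (q+1+l) (by omega) (by have := Finset.mem_range.mp hl; omega), mul_zero]
    rw [Finset.sum_eq_zero h0, zero_add, hce, one_mul]
    refine Finset.sum_congr rfl fun k _ => ?_
    congr 2
    omega
  have W2 : S = 0 := by
    rw [hS]
    have : ∀ l ∈ range (e+1), c' l * ∑ k ∈ range (d+1), c k * s (q+1+l+k)
        = ∑ k ∈ range (d+1), c k * (c' l * s (q+1+k+l)) := by
      intro l _
      rw [Finset.mul_sum]
      refine Finset.sum_congr rfl fun k _ => ?_
      rw [show q+1+l+k = q+1+k+l by omega]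
      ring
    rw [Finset.sum_congr rfl this, Finset.sum_comm]
    refine Finset.sum_eq_zero fun k hk => ?_
    rw [← Finset.mul_sum, hc' (q+1+k) (by omega)
      (by have := Finset.mem_range.mp hk; omega), mul_zero]
  exact hδ (W1 ▸ W2)

lemma sq_sum (a g : ℕ → F) :
    ∀ N, ∑ i ∈ range N, ∑ k ∈ range N, a i * a k * g (i+k) = ∑ i ∈ range N, a i * g (i+i) := by
  intro N
  induction N with
  | zero => simp
  | succ N ih =>
    rw [Finset.sum_range_succ (f := fun i => ∑ k ∈ range (N+1), a i * a k * g (i+k)),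
        Finset.sum_range_succ (f := fun i => a i * g (i+i))]
    have hrow : ∀ i, ∑ k ∈ range (N+1), a i * a k * g (i+k)
        = (∑ k ∈ range N, a i * a k * g (i+k)) + a i * a N * g (i+N) :=
      fun i => Finset.sum_range_succ _ N
    rw [Finset.sum_congr rfl (fun i _ => hrow i), Finset.sum_add_distrib, ih, hrow N,
        Fms (a N)]
    have hcancel : (∑ i ∈ range N, a i * a N * g (i+N)) + ∑ k ∈ range N, a N * a k * g (N+k) = 0 := by
      rw [← Finset.sum_add_distrib]
      refine Finset.sum_eq_zero fun i _ => ?_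
      rw [show N + i = i + N by omega]
      rw [show a N * a i * g (i+N) = a i * a N * g (i+N) by ring]
      exact Fas _
    have : (∑ i ∈ range N, a i * g (i+i)) + (∑ i ∈ range N, a i * a N * g (i+N))
        + ((∑ k ∈ range N, a N * a k * g (N+k)) + a N * g (N+N))
        = (∑ i ∈ range N, a i * g (i+i)) + a N * g (N+N) := by
      rw [add_assoc, ← add_assoc (∑ i ∈ range N, a i * a N * g (i+N)), hcancel, zero_add]
    rw [this]


lemma disc_eq {s : ℕ → F} (T : ℕ) (h1 : s 1 = 1)
    (hst : ∀ u, 1 ≤ u → u ≤ T → s (2*u+1) = s (2*u) + s u)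
    {c : ℕ → F} (hct : c (T+1) = 1) (hc : Ann s (2*(T+1)) (T+1) c)
    (hmin : ∀ c', c' T = 1 → ¬ Ann s (2*(T+1)) T c') :
    ∑ k ∈ range (T+2), c k * s (T+2+k) = 1 + s (2*T+3) + s (2*T+2) + s (T+1) := by
  set K := ∑ k ∈ range (T+1), c (k+1) * s (k+1) with hK
  -- minimality gives: c 0 = 1 or K = 1
  have hck : c 0 = 1 ∨ K = 1 := by
    by_contra hcon
    push_neg at hcon
    have hc0 : c 0 = 0 := Fn1 _ hcon.1
    have hK0 : K = 0 := Fn1 _ hcon.2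
    refine hmin (fun k => c (k+1)) hct ?_
    intro i hi him
    rcases Nat.eq_or_lt_of_le hi with h1' | h2'
    · rw [← h1', ← hK0, hK]
      exact Finset.sum_congr rfl fun k _ => by congr 2 <;> omega
    · obtain ⟨i', rfl⟩ : ∃ i', i = i' + 1 := ⟨i - 1, by omega⟩
      have heq := hc i' (by omega) (by omega)
      rw [Finset.sum_range_succ'] at heq
      rw [hc0, zero_mul, add_zero] at heq
      rw [← heq]
      exact Finset.sum_congr rfl fun k _ => by congr 2 <;> omega
  -- the symmetric double-sum identity, odd version
  have hU1 : ∑ i ∈ range (T+2), ∑ k ∈ range (T+2), c i * c k * s (i+k+1)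
      = ∑ i ∈ range (T+2), c i * s (i+i+1) := sq_sum c (fun m => s (m+1)) (T+2)
  have hU2 : ∑ i ∈ range (T+2), ∑ k ∈ range (T+2), c i * c k * s (i+k+1)
      = ∑ k ∈ range (T+2), c k * s (T+2+k) := by
    have hrw : ∀ i ∈ range (T+2), ∑ k ∈ range (T+2), c i * c k * s (i+k+1)
        = c i * ∑ k ∈ range (T+2), c k * s ((i+1)+k) := by
      intro i _
      rw [Finset.mul_sum]
      refine Finset.sum_congr rfl fun k _ => ?_
      rw [show i+k+1 = i+1+k by omega]
      ring
    rw [Finset.sum_congr rfl hrw, Finset.sum_range_succ]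
    have h0 : ∀ i ∈ range (T+1), c i * ∑ k ∈ range (T+2), c k * s ((i+1)+k) = 0 := by
      intro i hi
      rw [hc (i+1) (by omega) (by have := Finset.mem_range.mp hi; omega), mul_zero]
    rw [Finset.sum_eq_zero h0, zero_add, hct, one_mul]
  -- the symmetric double-sum identity, even version
  have hV1 : ∑ i ∈ range (T+2), ∑ k ∈ range (T+2), c i * c k * s (i+k)
      = ∑ i ∈ range (T+2), c i * s (i+i) := sq_sum c s (T+2)
  have hV2 : ∑ i ∈ range (T+2), ∑ k ∈ range (T+2), c i * c k * s (i+k)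
      = c 0 * (c 0 * s 0 + K) := by
    have hrw : ∀ i ∈ range (T+2), ∑ k ∈ range (T+2), c i * c k * s (i+k)
        = c i * ∑ k ∈ range (T+2), c k * s (i+k) := by
      intro i _
      rw [Finset.mul_sum]
      exact Finset.sum_congr rfl fun k _ => mul_assoc _ _ _
    rw [Finset.sum_congr rfl hrw, Finset.sum_range_succ']
    have h0 : ∀ i ∈ range (T+1), c (i+1) * ∑ k ∈ range (T+2), c k * s ((i+1)+k) = 0 := by
      intro i hi
      rw [hc (i+1) (by omega) (by have := Finset.mem_range.mp hi; omega), mul_zero]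
    rw [Finset.sum_eq_zero h0, zero_add]
    congr 1
    rw [Finset.sum_range_succ']
    rw [show ((0:ℕ)+0) = 0 by omega, add_comm, hK]
    congr 1
    exact Finset.sum_congr rfl fun k _ => by congr 2 <;> omega
  -- consequence: the even diagonal sum
  have hVpe : (∑ i ∈ range (T+1), c (i+1) * s ((i+1)+(i+1))) + c 0 * s (0+0) = c 0 * s 0 + c 0 * K := by
    rw [← Finset.sum_range_succ' (fun i => c i * s (i+i)) (T+1), ← hV1, hV2]
    linear_combination s 0 * Fms (c 0)
  have hVp : ∑ i ∈ range (T+1), c (i+1) * s ((i+1)+(i+1)) = c 0 * K := by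
    rw [show ((0:ℕ)+0) = 0 by omega] at hVpe
    rw [add_comm] at hVpe
    exact add_left_cancel hVpe
  have hVT : (∑ i ∈ range T, c (i+1) * s ((i+1)+(i+1))) + c (T+1) * s ((T+1)+(T+1)) = c 0 * K := by
    rw [← Finset.sum_range_succ (fun i => c (i+1) * s ((i+1)+(i+1))) T]
    exact hVp
  have heA : ∑ i ∈ range T, c (i+1) * s ((i+1)+(i+1)) = c 0 * K + s (2*T+2) := by
    rw [show s ((T+1)+(T+1)) = s (2*T+2) by congr 1; omega, hct, one_mul] at hVT
    linear_combination hVT - Fas (s (2*T+2))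
  have hKT : (∑ i ∈ range T, c (i+1) * s (i+1)) + c (T+1) * s (T+1) = K := by
    rw [← Finset.sum_range_succ (fun i => c (i+1) * s (i+1)) T]
  have heB : ∑ i ∈ range T, c (i+1) * s (i+1) = K + s (T+1) := by
    rw [hct, one_mul] at hKT
    linear_combination hKT - Fas (s (T+1))
  -- assemble
  have hD : ∑ k ∈ range (T+2), c k * s (T+2+k) = ∑ i ∈ range (T+2), c i * s (i+i+1) := by
    rw [← hU2, hU1]
  have split1 : ∑ i ∈ range (T+2), c i * s (i+i+1)
      = (∑ i ∈ range (T+1), c (i+1) * s ((i+1)+(i+1)+1)) + c 0 * s (0+0+1) :=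
    Finset.sum_range_succ' (fun i => c i * s (i+i+1)) (T+1)
  have split2 : ∑ i ∈ range (T+1), c (i+1) * s ((i+1)+(i+1)+1)
      = (∑ i ∈ range T, c (i+1) * s ((i+1)+(i+1)+1)) + c (T+1) * s ((T+1)+(T+1)+1) :=
    Finset.sum_range_succ (fun i => c (i+1) * s ((i+1)+(i+1)+1)) T
  have hstab : ∑ i ∈ range T, c (i+1) * s ((i+1)+(i+1)+1)
      = (∑ i ∈ range T, c (i+1) * s ((i+1)+(i+1))) + ∑ i ∈ range T, c (i+1) * s (i+1) := by
    rw [← Finset.sum_add_distrib]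
    refine Finset.sum_congr rfl fun i hi => ?_
    have hu := hst (i+1) (by omega) (by have := Finset.mem_range.mp hi; omega)
    rw [show (i+1)+(i+1)+1 = 2*(i+1)+1 by omega, hu,
        show 2*(i+1) = (i+1)+(i+1) by omega, mul_add]
  rw [hD, split1, split2, hstab, heA, heB,
      show s ((T+1)+(T+1)+1) = s (2*T+3) by congr 1; omega, hct, one_mul,
      show ((0:ℕ)+0+1) = 1 by omega, h1, mul_one]
  rcases hck with h | h
  · rw [h, one_mul]
    linear_combination Fas K
  · rw [h, mul_one]
    linear_combination Fas (c 0)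


lemma step {s : ℕ → F} (U : ℕ) {b d : ℕ → F}
    (hbu : b (U+1) = 1) (hb0 : ∀ k, U+1 < k → b k = 0) (hbann : Ann s (2*U+2) (U+1) b)
    (hbd : ∑ k ∈ range (U+2), b k * s (U+2+k) = 1)
    (hd0 : ∀ k, U < k → d k = 0) (hdann : Ann s (2*U) U d)
    (hdd : ∑ k ∈ range (U+1), d k * s (U+1+k) = 1) :
    ∃ c, c (U+2) = 1 ∧ (∀ k, U+2 < k → c k = 0) ∧ Ann s (2*U+4) (U+2) c := by
  set β := ∑ k ∈ range (U+2), b k * s (U+3+k) with hβ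
  set γ := ∑ k ∈ range (U+1), d k * s (U+2+k) with hγ
  set a := β + γ with ha
  refine ⟨fun k => (if k = 0 then 0 else b (k-1)) + a * b k + d k, ?_, ?_, ?_⟩
  · show (if U+2 = 0 then 0 else b (U+2-1)) + a * b (U+2) + d (U+2) = 1
    rw [if_neg (by omega : ¬ U+2 = 0),
      show U+2-1 = U+1 by omega, hbu, hb0 (U+2) (by omega), hd0 (U+2) (by omega)]
    ring
  · intro k hk
    show (if k = 0 then 0 else b (k-1)) + a * b k + d k = 0
    rw [if_neg (by omega : ¬ k = 0), hb0 (k-1) (by omega), hb0 k (by omega), hd0 k (by omega)]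
    ring
  · intro i hi him
    have hsplit : ∑ k ∈ range (U+3), ((if k = 0 then 0 else b (k-1)) + a * b k + d k) * s (i+k)
        = (∑ k ∈ range (U+3), (if k = 0 then 0 else b (k-1)) * s (i+k))
          + (∑ k ∈ range (U+3), a * b k * s (i+k))
          + ∑ k ∈ range (U+3), d k * s (i+k) := by
      rw [← Finset.sum_add_distrib, ← Finset.sum_add_distrib]
      exact Finset.sum_congr rfl fun k _ => by ring
    show ∑ k ∈ range (U+3), ((if k = 0 then 0 else b (k-1)) + a * b k + d k) * s (i+k) = 0
    rw [hsplit]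
    have hS1 : ∑ k ∈ range (U+3), (if k = 0 then 0 else b (k-1)) * s (i+k)
        = ∑ k ∈ range (U+2), b k * s ((i+1)+k) := by
      rw [Finset.sum_range_succ' (fun k => (if k = 0 then 0 else b (k-1)) * s (i+k)) (U+2)]
      have h00 : (if (0:ℕ) = 0 then (0:F) else b (0-1)) * s (i+0) = 0 := by simp
      rw [h00, add_zero]
      refine Finset.sum_congr rfl fun k _ => ?_
      rw [if_neg (Nat.succ_ne_zero k), Nat.add_sub_cancel]
      congr 2
      omega
    have hS2 : ∑ k ∈ range (U+3), a * b k * s (i+k)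
        = a * ∑ k ∈ range (U+2), b k * s (i+k) := by
      rw [Finset.sum_range_succ, hb0 (U+2) (by omega), Finset.mul_sum]
      simp only [zero_mul, mul_zero, add_zero]
      exact Finset.sum_congr rfl fun k _ => by ring
    have hS3 : ∑ k ∈ range (U+3), d k * s (i+k) = ∑ k ∈ range (U+1), d k * s (i+k) := by
      rw [Finset.sum_range_succ, Finset.sum_range_succ, hd0 (U+2) (by omega),
          hd0 (U+1) (by omega)]
      simp
    rw [hS1, hS2, hS3]
    have hiU : i ≤ U ∨ i = U+1 ∨ i = U+2 := by omega
    rcases hiU with h | h | h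
    · rw [hbann (i+1) (by omega) (by omega), hbann i (by omega) (by omega),
          hdann i (by omega) (by omega), mul_zero]
      ring
    · subst h
      have e1 : ∑ k ∈ range (U+2), b k * s ((U+1+1)+k) = 1 := hbd
      have e3 : ∑ k ∈ range (U+1), d k * s ((U+1)+k) = 1 := hdd
      rw [e1, e3, hbann (U+1) (by omega) (by omega), mul_zero]
      exact Fas 1
    · subst h
      have e1 : ∑ k ∈ range (U+2), b k * s ((U+2+1)+k) = β := hβ.symm
      have e2 : ∑ k ∈ range (U+2), b k * s ((U+2)+k) = 1 := hbd
      have e3 : ∑ k ∈ range (U+1), d k * s ((U+2)+k) = γ := hγ.symm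
      rw [e1, e2, e3, mul_one, ha]
      linear_combination Fas β + Fas γ

end PLCPaux

open PLCPaux

theorem plcp_iff_stable (n : ℕ) (hn : 1 ≤ n) (hodd : Odd n) (s : ℕ → ZMod 2) :
    (∀ j, 1 ≤ j → j ≤ n → LC s j = (j + 1) / 2) ↔
      (s 1 = 1 ∧ ∀ j, 2 ≤ j → j ≤ n - 1 → Even j → s (j + 1) = s j + s (j / 2)) := by
  constructor
  · -- PLCP implies stable
    intro hplcp
    have h1 : s 1 = 1 := by
      have hLC1 : LC s 1 = 1 := by have := hplcp 1 le_rfl hn; omega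
      by_contra hne
      have hs0 : s 1 = 0 := Fn1 _ hne
      have hg : Good s 1 0 := by
        refine ⟨fun _ => 1, rfl, fun i hi him => ?_⟩
        obtain rfl : i = 1 := by omega
        simp [hs0]
      have := LC_le hg
      omega
    refine ⟨h1, ?_⟩
    have key : ∀ t, 1 ≤ t → 2*t+1 ≤ n → s (2*t+1) = s (2*t) + s t := by
      intro t
      induction t using Nat.strong_induction_on with
      | _ t IH =>
        intro ht1 htn
        have hLCe : LC s (2*t) = t := by
          have := hplcp (2*t) (by omega) (by omega); omega
        have hLCo : LC s (2*t+1) = t+1 := by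
          have := hplcp (2*t+1) (by omega) (by omega); omega
        have hg := good_LC s (2*t)
        rw [hLCe] at hg
        obtain ⟨c, hct, hc⟩ := hg
        have hmin : ∀ c', c' (t-1) = 1 → ¬ Ann s (2*t) (t-1) c' := by
          intro c' hc' hann
          have : LC s (2*t) ≤ t-1 := LC_le ⟨c', hc', hann⟩
          omega
        obtain ⟨T, rfl⟩ : ∃ T, t = T+1 := ⟨t-1, by omega⟩
        have hdisc := disc_eq T h1 (fun u hu1 huT => IH u (by omega) hu1 (by omega)) hct hc hmin
        have hΔne : ∑ k ∈ Finset.range (T+2), c k * s (T+2+k) ≠ 0 := by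
          intro h0
          have hext : Ann s (2*(T+1)+1) (T+1) c := by
            intro i hi him
            rcases (by omega : i + (T+1) ≤ 2*(T+1) ∨ i = T+2) with hle | hi2
            · exact hc i hi hle
            · obtain rfl : i = T+2 := hi2
              exact h0
          have := LC_le ⟨c, hct, hext⟩
          omega
        rw [hdisc] at hΔne
        have hfin : ∀ x y z : F, 1 + x + y + z ≠ 0 → x = y + z := by decide
        have := hfin _ _ _ hΔne
        rw [show 2*(T+1)+1 = 2*T+3 by omega, show 2*(T+1) = 2*T+2 by omega]
        exact this
    intro j hj2 hjn hev
    obtain ⟨t, rfl⟩ : ∃ t, j = 2*t := ⟨j/2, by have := Nat.even_iff.mp hev; omega⟩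
    rw [show 2*t/2 = t by omega]
    exact key t (by omega) (by omega)
  · -- stable implies PLCP
    rintro ⟨h1, hst⟩
    have hst' : ∀ u, 1 ≤ u → 2*u+1 ≤ n → s (2*u+1) = s (2*u) + s u := by
      intro u hu1 hun
      have := hst (2*u) (by omega) (by omega) (even_two_mul u)
      rwa [show 2*u/2 = u by omega] at this
    have P : ∀ t, 2*t ≤ n+1 → ∃ c, c t = 1 ∧ (∀ k, t < k → c k = 0) ∧ Ann s (2*t) t c ∧
        (2*t+1 ≤ n → ∑ k ∈ Finset.range (t+1), c k * s (t+1+k) = 1) := by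
      intro t
      induction t using Nat.strong_induction_on with
      | _ t IH =>
        intro htn
        match t, IH with
        | 0, _ =>
          refine ⟨fun k => if k = 0 then 1 else 0, rfl, fun k hk => ?_, fun i hi him => absurd him (by omega), fun _ => ?_⟩
          · show (if k = 0 then (1:F) else 0) = 0
            rw [if_neg (by omega : ¬ k = 0)]
          · rw [Finset.sum_range_one]
            simp [h1]
        | 1, _ =>
          refine ⟨fun k => if k = 0 then s 2 else if k = 1 then 1 else 0, rfl, fun k hk => ?_, fun i hi him => ?_, fun hn3 => ?_⟩
          · show (if k = 0 then s 2 else if k = 1 then 1 else 0) = 0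
            rw [if_neg (by omega : ¬ k = 0), if_neg (by omega : ¬ k = 1)]
          · obtain rfl : i = 1 := by omega
            rw [Finset.sum_range_succ, Finset.sum_range_one]
            norm_num [h1]
            exact Fas (s 2)
          · rw [Finset.sum_range_succ, Finset.sum_range_one]
            norm_num
            have h3 : s 3 = s 2 + s 1 := by
              have := hst' 1 le_rfl (by omega)
              rwa [show 2*1+1 = 3 by omega, show 2*1 = 2 by omega] at this
            rw [h3, h1]
            linear_combination Fms (s 2) + Fas (s 2)
        | (U+2), IH =>
          obtain ⟨b, hbu, hb0, hbann, hbd⟩ := IH (U+1) (by omega) (by omega)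
          obtain ⟨d, hdu, hd0, hdann, hdd⟩ := IH U (by omega) (by omega)
          have hbd' : ∑ k ∈ Finset.range (U+2), b k * s (U+2+k) = 1 := by
            have := hbd (by omega)
            rwa [show U+1+1 = U+2 by omega] at this
          have hdd' : ∑ k ∈ Finset.range (U+1), d k * s (U+1+k) = 1 := hdd (by omega)
          have hbann' : Ann s (2*U+2) (U+1) b := by
            rwa [show 2*(U+1) = 2*U+2 by omega] at hbann
          obtain ⟨c, hcu, hc0, hcann⟩ := step U hbu hb0 hbann' hbd' hd0 hdann hdd'
          have hcann' : Ann s (2*(U+2)) (U+2) c := by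
            rwa [show 2*(U+2) = 2*U+4 by omega]
          refine ⟨c, hcu, hc0, hcann', ?_⟩
          intro hn2
          have hmin2 : ∀ c', c' (U+1) = 1 → ¬ Ann s (2*(U+2)) (U+1) c' := by
            intro c' hce hann
            have hb2 : Ann s ((U+1)+(U+1)+0) (U+1) b := by
              rw [show (U+1)+(U+1)+0 = 2*(U+1) by omega]
              exact hbann
            have hδ2 : ∑ k ∈ Finset.range ((U+1)+1), b k * s ((U+1)+0+1+k) ≠ 0 := by
              rw [show (U+1)+0+1 = U+2 by omega, show (U+1)+1 = U+2 by omega, hbd']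
              exact one_ne_zero
            have hc'2 : Ann s ((U+1)+(U+1)+0+1) (U+1) c' := by
              rw [show (U+1)+(U+1)+0+1 = 2*U+3 by omega]
              exact Ann_mono (by omega) hann
            exact massey hb2 hδ2 hce hc'2
          have hd2 := disc_eq (U+1) h1 (fun u hu1 hut => hst' u hu1 (by omega)) hcu hcann' hmin2
          have hx : s (2*(U+2)+1) = s (2*(U+2)) + s (U+2) := hst' (U+2) (by omega) (by omega)
          rw [show U+2+1 = U+1+2 by omega, hd2,
              show 2*(U+1)+3 = 2*(U+2)+1 by omega, show 2*(U+1)+2 = 2*(U+2) by omega, hx]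
          linear_combination Fas (s (2*(U+2))) + Fas (s (U+2))
    intro j hj1 hjn
    rcases Nat.even_or_odd j with hev | hodd'
    · obtain ⟨t, rfl⟩ : ∃ t, j = 2*t := ⟨j/2, by have := Nat.even_iff.mp hev; omega⟩
      rw [show (2*t+1)/2 = t by omega]
      have ht1 : 1 ≤ t := by omega
      apply le_antisymm
      · obtain ⟨c, hct, _, hcann, _⟩ := P t (by omega)
        exact LC_le ⟨c, hct, hcann⟩
      · refine le_LC fun e he => ?_
        obtain ⟨c', hce, hann⟩ := he
        by_contra hlt
        push_neg at hlt
        obtain ⟨U, rfl⟩ : ∃ U, t = U+1 := ⟨t-1, by omega⟩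
        obtain ⟨b, hbu, _, hbann, hbd⟩ := P U (by omega)
        have hbd' := hbd (by omega)
        have h_c : Ann s (U+e+(U-e)) U b := by
          rw [show U+e+(U-e) = 2*U by omega]
          exact hbann
        have h_δ : ∑ k ∈ Finset.range (U+1), b k * s (e+(U-e)+1+k) ≠ 0 := by
          rw [show e+(U-e)+1 = U+1 by omega, hbd']
          exact one_ne_zero
        have h_c' : Ann s (U+e+(U-e)+1) e c' := by
          rw [show U+e+(U-e)+1 = 2*U+1 by omega]
          exact Ann_mono (by omega) hann
        exact massey h_c h_δ hce h_c'
    · obtain ⟨t, rfl⟩ := hodd'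
      rw [show (2*t+1+1)/2 = t+1 by omega]
      apply le_antisymm
      · obtain ⟨c, hct, _, hcann, _⟩ := P (t+1) (by omega)
        exact LC_le ⟨c, hct, Ann_mono (by omega) hcann⟩
      · refine le_LC fun e he => ?_
        obtain ⟨c', hce, hann⟩ := he
        by_contra hlt
        push_neg at hlt
        obtain ⟨b, hbu, _, hbann, hbd⟩ := P t (by omega)
        have hbd' := hbd (by omega)
        have h_c : Ann s (t+e+(t-e)) t b := by
          rw [show t+e+(t-e) = 2*t by omega]
          exact hbann
        have h_δ : ∑ k ∈ Finset.range (t+1), b k * s (e+(t-e)+1+k) ≠ 0 := by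
          rw [show e+(t-e)+1 = t+1 by omega, hbd']
          exact one_ne_zero
        have h_c' : Ann s (t+e+(t-e)+1) e c' := by
          rw [show t+e+(t-e)+1 = 2*t+1 by omega]
          exact hann
        exact massey h_c h_δ hce h_c'
end

section
/- Let r : ℕ → 𝔽₂ be the sequence with r_j = 1 if j is a power of 2 and r_j = 0 otherwise. Then for every n ≥ 1, the linear complexity of the prefix (r₁,…,r_n) equals ⌊(n+1)/2⌋; i.e. r has a perfect linear complexity profile. (Rueppel's conjecture.) -/
open Polynomial

lemma coeff_mk {R : Type*} [CommRing R] (c : ℕ → R) (M t : ℕ) :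
    (∑ j ∈ Finset.range M, C (c j) * X ^ j).coeff t = if t < M then c t else 0 := by
  rw [finset_sum_coeff]
  simp only [coeff_C_mul, coeff_X_pow]
  by_cases ht : t < M
  · rw [if_pos ht, Finset.sum_eq_single t]
    · simp
    · intro b _ hb; simp [Ne.symm hb]
    · intro h; exact absurd (Finset.mem_range.2 ht) h
  · rw [if_neg ht, Finset.sum_eq_zero]
    intro b hb
    have : b ≠ t := by simp [Finset.mem_range] at hb; omega
    simp [Ne.symm this]

lemma no_solution {F : Type*} [Field F] (p q : Polynomial F) (hq : q ≠ 0) :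
    p * p + q * p + X * (q * q) ≠ 0 := by
  rcases eq_or_ne p 0 with rfl | hp
  · simpa using mul_ne_zero X_ne_zero (mul_ne_zero hq hq)
  rcases le_or_gt p.natDegree q.natDegree with hab | hab
  · set b := q.natDegree with hb
    intro h
    have h1 : (p * p).coeff (b + b + 1) = 0 :=
      coeff_eq_zero_of_natDegree_lt (lt_of_le_of_lt natDegree_mul_le (by omega))
    have h2 : (q * p).coeff (b + b + 1) = 0 :=
      coeff_eq_zero_of_natDegree_lt (lt_of_le_of_lt natDegree_mul_le (by omega))
    have h3 : (X * (q * q)).coeff (b + b + 1) = q.leadingCoeff * q.leadingCoeff := by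
      rw [coeff_X_mul, coeff_mul_degree_add_degree]
    have := congrArg (fun t => Polynomial.coeff t (b + b + 1)) h
    simp only [coeff_add, h1, h2, h3, coeff_zero, zero_add] at this
    exact mul_ne_zero (leadingCoeff_ne_zero.2 hq) (leadingCoeff_ne_zero.2 hq) this
  · set a := p.natDegree with ha
    intro h
    have h1 : (p * p).coeff (a + a) = p.leadingCoeff * p.leadingCoeff :=
      coeff_mul_degree_add_degree p p
    have h2 : (q * p).coeff (a + a) = 0 :=
      coeff_eq_zero_of_natDegree_lt (lt_of_le_of_lt natDegree_mul_le (by omega))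
    have h3 : (X * (q * q)).coeff (a + a) = 0 := by
      refine coeff_eq_zero_of_natDegree_lt (lt_of_le_of_lt natDegree_mul_le ?_)
      have := natDegree_mul_le (p := q) (q := q)
      simp only [natDegree_X]
      omega
    have := congrArg (fun t => Polynomial.coeff t (a + a)) h
    simp only [coeff_add, h1, h2, h3, coeff_zero, add_zero, zero_add] at this
    exact mul_ne_zero (leadingCoeff_ne_zero.2 hp) (leadingCoeff_ne_zero.2 hp) this

lemma rueppel_lower (r : ℕ → ZMod 2)
    (hr : ∀ j, (∃ k : ℕ, j = 2 ^ k) → r j = 1)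
    (hr' : ∀ j, (¬ ∃ k : ℕ, j = 2 ^ k) → r j = 0)
    (N : ℕ) (f : Polynomial (ZMod 2)) (hf : f ≠ 0)
    (hann : IsAnnihilator r N f) : N ≤ 2 * f.natDegree := by
  by_contra hN
  push_neg at hN
  set d := f.natDegree with hd
  have hA := hann.resolve_left hf
  -- facts about r
  have r_one : r 1 = 1 := hr 1 ⟨0, rfl⟩
  have r_two_mul : ∀ i, r (2 * i) = r i := by
    intro i
    by_cases hi : ∃ k, i = 2 ^ k
    · obtain ⟨k, rfl⟩ := hi
      rw [hr _ ⟨k, rfl⟩, hr _ ⟨k + 1, by ring⟩]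
    · rw [hr' i hi, hr' (2 * i)]
      rintro ⟨k, hk⟩
      apply hi
      cases k with
      | zero => simp at hk
      | succ k =>
        refine ⟨k, ?_⟩
        rw [pow_succ] at hk
        omega
  have r_odd : ∀ j, 2 ≤ j → j % 2 = 1 → r j = 0 := by
    intro j h2 hodd
    apply hr'
    rintro ⟨k, rfl⟩
    cases k with
    | zero => simp at h2
    | succ k => rw [pow_succ] at hodd; omega
  -- the truncated generating polynomial
  set P := ∑ j ∈ Finset.range (N + 1), C (r j) * X ^ j with hP
  have coeff_P : ∀ t, P.coeff t = if t < N + 1 then r t else 0 := fun t => coeff_mk r (N + 1) t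
  have hsq : P * P = expand (ZMod 2) 2 P := by
    haveI : Fact (Nat.Prime 2) := ⟨Nat.prime_two⟩
    have h := Polynomial.map_frobenius_expand (p := 2) P
    have hfr : frobenius (ZMod 2) 2 = RingHom.id (ZMod 2) := by
      ext x; simp [frobenius_def, ZMod.pow_card]
    rw [hfr, Polynomial.map_id] at h
    rw [← pow_two, ← h]
  have P_sq : ∀ t, t ≤ N → (P * P + P + X).coeff t = 0 := by
    intro t ht
    rw [coeff_add, coeff_add, hsq, coeff_expand (by norm_num)]
    rcases Nat.even_or_odd t with ⟨i, hi⟩ | ⟨i, hi⟩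
    · subst hi
      rw [if_pos ⟨i, by omega⟩]
      have e1 : (i + i) / 2 = i := by omega
      rw [e1, coeff_P, coeff_P, if_pos (by omega), if_pos (by omega), coeff_X,
        if_neg (by omega)]
      have : i + i = 2 * i := by omega
      rw [this, r_two_mul, add_zero]
      exact CharTwo.add_self_eq_zero _
    · subst hi
      rw [if_neg (by omega), coeff_P, if_pos (by omega), coeff_X]
      rcases Nat.eq_zero_or_pos i with rfl | hipos
      · norm_num [r_one]
        decide
      · rw [if_neg (by omega), r_odd (2 * i + 1) (by omega) (by omega)]
        simp
  -- the reversed annihilator polynomial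
  set Q := ∑ i ∈ Finset.range (d + 1), C (f.coeff (d - i)) * X ^ i with hQ
  have coeff_Q : ∀ t, Q.coeff t = if t < d + 1 then f.coeff (d - t) else 0 :=
    fun t => coeff_mk _ (d + 1) t
  have hQne : Q ≠ 0 := by
    intro h
    have := coeff_Q 0
    rw [h] at this
    simp only [coeff_zero, if_pos (by omega : (0:ℕ) < d + 1), Nat.sub_zero] at this
    exact (leadingCoeff_ne_zero.2 hf) this.symm
  have hQdeg : Q.natDegree ≤ d := by
    rw [natDegree_le_iff_coeff_eq_zero]
    intro t ht; rw [coeff_Q, if_neg (by omega)]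
  have hQP : ∀ j, d + 1 ≤ j → j ≤ N →
      (Q * P).coeff j = ∑ k ∈ Finset.range (d + 1), f.coeff k * r (j - d + k) := by
    intro j hj1 hj2
    have e : Q * P = ∑ i ∈ Finset.range (d + 1), C (f.coeff (d - i)) * (P * X ^ i) := by
      rw [hQ, Finset.sum_mul]
      apply Finset.sum_congr rfl
      intros; ring
    rw [e, finset_sum_coeff]
    rw [Finset.sum_congr rfl (g := fun i => f.coeff (d - i) * r (j - i)) ?_]
    · have hrefl := Finset.sum_range_reflect (fun k => f.coeff k * r (j - d + k)) (d + 1)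
      rw [← hrefl]
      apply Finset.sum_congr rfl
      intro i hi
      simp only [Finset.mem_range] at hi
      congr 2 <;> omega
    · intro i hi
      simp only [Finset.mem_range] at hi
      rw [coeff_C_mul, coeff_mul_X_pow', if_pos (by omega), coeff_P, if_pos (by omega)]
  -- the remainder polynomial
  set g := ∑ t ∈ Finset.range (d + 1), C ((Q * P).coeff t) * X ^ t with hg
  have coeff_g : ∀ t, g.coeff t = if t < d + 1 then (Q * P).coeff t else 0 :=
    fun t => coeff_mk _ (d + 1) t
  have hgdeg : g.natDegree ≤ d := by
    rw [natDegree_le_iff_coeff_eq_zero]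
    intro t ht; rw [coeff_g, if_neg (by omega)]
  have hdvd1 : X ^ (N + 1) ∣ (Q * P + g) := by
    rw [X_pow_dvd_iff]
    intro t ht
    rw [coeff_add, coeff_g]
    by_cases htd : t < d + 1
    · rw [if_pos htd]; exact CharTwo.add_self_eq_zero _
    · rw [if_neg htd, add_zero, hQP t (by omega) (by omega)]
      exact hA t (by omega) (by omega)
  have hdvd2 : X ^ (N + 1) ∣ (P * P + P + X) := by
    rw [X_pow_dvd_iff]
    intro t ht
    exact P_sq t (by omega)
  have key : g * g + Q * g + X * (Q * Q) =
      (Q * P + g) * (Q * P + g) + Q * (Q * P + g) + (Q * Q) * (P * P + P + X) := by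
    have h2 : (2 : Polynomial (ZMod 2)) = 0 := CharTwo.two_eq_zero
    linear_combination (-(Q * Q * P * P + Q * Q * P + Q * P * g)) * h2
  have hdvdh : X ^ (N + 1) ∣ (g * g + Q * g + X * (Q * Q)) := by
    rw [key]
    exact dvd_add (dvd_add (hdvd1.mul_left _) (hdvd1.mul_left _)) (hdvd2.mul_left _)
  have hzero : g * g + Q * g + X * (Q * Q) = 0 := by
    by_contra hne0
    have hle := Polynomial.natDegree_le_of_dvd hdvdh hne0
    rw [natDegree_X_pow] at hle
    have e1 : (g * g).natDegree ≤ 2 * d := le_trans natDegree_mul_le (by omega)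
    have e2 : (Q * g).natDegree ≤ 2 * d := le_trans natDegree_mul_le (by omega)
    have e3 : (X * (Q * Q)).natDegree ≤ 2 * d + 1 := by
      refine le_trans natDegree_mul_le ?_
      have := natDegree_mul_le (p := Q) (q := Q)
      simp only [natDegree_X]
      omega
    have e4 := natDegree_add_le (g * g + Q * g) (X * (Q * Q))
    have e5 := natDegree_add_le (g * g) (Q * g)
    omega
  exact no_solution g Q hQne hzero



theorem rueppel (r : ℕ → ZMod 2)
    (hr : ∀ j, (∃ k : ℕ, j = 2 ^ k) → r j = 1)
    (hr' : ∀ j, (¬ ∃ k : ℕ, j = 2 ^ k) → r j = 0)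
    (n : ℕ) (hn : 1 ≤ n) : LC r n = (n + 1) / 2 := by
  classical
  set m := (n + 1) / 2 with hm
  let φ : (Fin (m + 1) → ZMod 2) →ₗ[ZMod 2] (Fin m → ZMod 2) :=
    { toFun := fun c i => ∑ k : Fin (m + 1), c k * r (i.1 + 1 + k.1)
      map_add' := by intro a b; funext i; simp [add_mul, Finset.sum_add_distrib]
      map_smul' := by intro a b; funext i; simp [Finset.mul_sum, mul_assoc] }
  have hnotinj : ¬ Function.Injective φ := by
    intro hinj
    have := LinearMap.finrank_le_finrank_of_injective hinj
    simp [Module.finrank_pi] at this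
  obtain ⟨c, hc0, hφc⟩ : ∃ c, c ≠ 0 ∧ φ c = 0 := by
    rw [Function.not_injective_iff] at hnotinj
    obtain ⟨a, b, hab, hne⟩ := hnotinj
    exact ⟨a - b, sub_ne_zero.2 hne, by rw [map_sub, hab, sub_self]⟩
  set c' : ℕ → ZMod 2 := fun k => if h : k < m + 1 then c ⟨k, h⟩ else 0 with hc'
  have hc'pos : ∀ (t : ℕ) (h : t < m + 1), c' t = c ⟨t, h⟩ := by
    intro t h; simp only [hc']; rw [dif_pos h]
  have hc'neg : ∀ (t : ℕ), ¬ t < m + 1 → c' t = 0 := by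
    intro t h; simp only [hc']; rw [dif_neg h]
  set f : Polynomial (ZMod 2) := ∑ k ∈ Finset.range (m + 1), C (c' k) * X ^ k with hf
  have coeff_f : ∀ t, f.coeff t = c' t := by
    intro t
    rw [hf, coeff_mk]
    split
    · rfl
    · next h => rw [hc'neg t h]
  have hf0 : f ≠ 0 := by
    obtain ⟨k, hk⟩ := Function.ne_iff.1 hc0
    intro h
    apply hk
    have h2 := coeff_f k
    rw [h, coeff_zero, hc'pos k k.2] at h2
    simpa using h2.symm
  have hfdeg : f.natDegree ≤ m := by
    rw [natDegree_le_iff_coeff_eq_zero]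
    intro t ht
    rw [coeff_f, hc'neg t (by omega)]
  have hsys : ∀ i : Fin m, ∑ k ∈ Finset.range (m + 1), c' k * r (i.1 + 1 + k) = 0 := by
    intro i
    have h0 : φ c i = 0 := by rw [hφc]; rfl
    simp only [φ, LinearMap.coe_mk, AddHom.coe_mk] at h0
    rw [← Fin.sum_univ_eq_sum_range (fun k => c' k * r (i.1 + 1 + k)) (m + 1), ← h0]
    apply Finset.sum_congr rfl
    intro k _
    rw [hc'pos k k.2]
  have hann0 : IsAnnihilator r (f.natDegree + m) f := by
    right
    intro j hj1 hj2
    have hsub : ∑ k ∈ Finset.range (f.natDegree + 1), f.coeff k * r (j - f.natDegree + k)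
        = ∑ k ∈ Finset.range (m + 1), f.coeff k * r (j - f.natDegree + k) := by
      apply Finset.sum_subset (Finset.range_subset_range.2 (by omega))
      intro k hk hk2
      simp only [Finset.mem_range] at hk hk2
      rw [coeff_eq_zero_of_natDegree_lt (by omega), zero_mul]
    rw [hsub]
    have hi : j - f.natDegree - 1 < m := by omega
    rw [← hsys ⟨j - f.natDegree - 1, hi⟩]
    apply Finset.sum_congr rfl
    intro k hk
    rw [coeff_f]
    congr 2
    simp only [Fin.val_mk]
    omega
  have hNd := rueppel_lower r hr hr' (f.natDegree + m) f hf0 hann0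
  have hdm : f.natDegree = m := by omega
  have hann : IsAnnihilator r n f := by
    right
    intro j hj1 hj2
    exact (hann0.resolve_left hf0) j hj1 (by omega)
  unfold LC
  apply le_antisymm
  · exact Nat.sInf_le ⟨f, hf0, hann, hdm⟩
  · refine le_csInf ⟨m, f, hf0, hann, hdm⟩ ?_
    rintro b ⟨f2, hf20, hann2, rfl⟩
    have := rueppel_lower r hr hr' n f2 hf20 hann2
    omega
end

section
/- Let D be an integral domain and s ∈ Dⁿ a finite sequence, with LC_i the linear complexity of the prefix (s₁,…,s_i). Then ∑_{i=1}^{n} LC_i ≤ ∑_{i=1}^{n} ⌊(i+1)/2⌋ = ⌊(n+1)²/4⌋. -/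
open Polynomial

namespace LCAux

variable {D : Type*} [CommRing D]

/-- Window sum of length `N` starting at position `j`. -/
def Bn (s : ℕ → D) (N : ℕ) (f : Polynomial D) (j : ℕ) : D :=
  ∑ k ∈ Finset.range N, f.coeff k * s (j + k)

/-- The canonical window sum. -/
def B (s : ℕ → D) (f : Polynomial D) (j : ℕ) : D := Bn s (f.natDegree + 1) f j

lemma Bn_eq_B (s : ℕ → D) {N : ℕ} {f : Polynomial D} (h : f.natDegree < N) (j : ℕ) :
    Bn s N f j = B s f j := by
  refine (Finset.sum_subset (Finset.range_subset_range.2 h) ?_).symm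
  intro k _ hk
  simp only [Finset.mem_range, not_lt] at hk
  rw [Polynomial.coeff_eq_zero_of_natDegree_lt (by omega), zero_mul]

lemma Bn_sub (s : ℕ → D) (N : ℕ) (f g : Polynomial D) (j : ℕ) :
    Bn s N (f - g) j = Bn s N f j - Bn s N g j := by
  simp [Bn, sub_mul, Finset.sum_sub_distrib]

lemma Bn_C_mul (s : ℕ → D) (N : ℕ) (c : D) (f : Polynomial D) (j : ℕ) :
    Bn s N (C c * f) j = c * Bn s N f j := by
  simp [Bn, Finset.mul_sum, mul_assoc]

lemma Bn_X_pow_mul (s : ℕ → D) (a N : ℕ) (f : Polynomial D) (j : ℕ) :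
    Bn s (a + N) (X ^ a * f) j = Bn s N f (j + a) := by
  unfold Bn
  rw [Finset.sum_range_add]
  have h1 : ∀ k ∈ Finset.range a, (X ^ a * f).coeff k * s (j + k) = 0 := by
    intro k hk
    simp only [Finset.mem_range] at hk
    rw [mul_comm (X ^ a) f, Polynomial.coeff_mul_X_pow', if_neg (by omega), zero_mul]
  rw [Finset.sum_eq_zero h1, zero_add]
  refine Finset.sum_congr rfl fun k _ => ?_
  rw [mul_comm (X ^ a) f, Polynomial.coeff_mul_X_pow', if_pos (by omega)]
  congr 2 <;> omega

lemma B_C_mul_X_pow_mul [IsDomain D] (s : ℕ → D) (c : D) (hc : c ≠ 0) (a : ℕ)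
    (f : Polynomial D) (hf : f ≠ 0) (j : ℕ) :
    B s (C c * (X ^ a * f)) j = c * B s f (j + a) := by
  have hd : (C c * (X ^ a * f)).natDegree = a + f.natDegree := by
    rw [Polynomial.natDegree_C_mul hc, Polynomial.natDegree_mul (pow_ne_zero _ Polynomial.X_ne_zero) hf,
      Polynomial.natDegree_X_pow]
  rw [show B s (C c * (X ^ a * f)) j = Bn s (a + (f.natDegree + 1)) (C c * (X ^ a * f)) j from
    (Bn_eq_B s (by omega) j).symm, Bn_C_mul, Bn_X_pow_mul]
  rfl

/-- Annihilator condition in window form. -/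
def Ann (s : ℕ → D) (n : ℕ) (f : Polynomial D) : Prop :=
  ∀ j, 1 ≤ j → j + f.natDegree ≤ n → B s f j = 0

lemma isAnnihilator_iff {s : ℕ → D} {n : ℕ} {f : Polynomial D} :
    IsAnnihilator s n f ↔ (f = 0 ∨ Ann s n f) := by
  unfold IsAnnihilator Ann
  refine or_congr Iff.rfl ⟨fun H j h1 h2 => ?_, fun H j h1 h2 => ?_⟩
  · have := H (j + f.natDegree) (by omega) (by omega)
    simpa [B, Bn, Nat.add_sub_cancel] using this
  · have := H (j - f.natDegree) (by omega) (by omega)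
    simpa [B, Bn] using this

lemma lc_eq (s : ℕ → D) (n : ℕ) :
    LC s n = sInf {d : ℕ | ∃ f : Polynomial D, f ≠ 0 ∧ Ann s n f ∧ f.natDegree = d} := by
  unfold LC
  congr 1
  ext d
  constructor
  · rintro ⟨f, h0, ha, hd⟩
    exact ⟨f, h0, (isAnnihilator_iff.1 ha).resolve_left h0, hd⟩
  · rintro ⟨f, h0, ha, hd⟩
    exact ⟨f, h0, isAnnihilator_iff.2 (Or.inr ha), hd⟩

variable [Nontrivial D]

lemma mem_deg_set (s : ℕ → D) (n : ℕ) :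
    n ∈ {d : ℕ | ∃ f : Polynomial D, f ≠ 0 ∧ Ann s n f ∧ f.natDegree = d} := by
  refine ⟨X ^ n, (Polynomial.monic_X_pow n).ne_zero, fun j h1 h2 => ?_,
    Polynomial.natDegree_X_pow n⟩
  rw [Polynomial.natDegree_X_pow] at h2
  omega

lemma lc_le_self (s : ℕ → D) (n : ℕ) : LC s n ≤ n := by
  rw [lc_eq]; exact Nat.sInf_le (mem_deg_set s n)

lemma exists_min (s : ℕ → D) (n : ℕ) :
    ∃ f : Polynomial D, f ≠ 0 ∧ Ann s n f ∧ f.natDegree = LC s n := by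
  rw [lc_eq]
  exact Nat.sInf_mem ⟨n, mem_deg_set s n⟩

lemma lc_le (s : ℕ → D) (n : ℕ) {f : Polynomial D} (h0 : f ≠ 0) (ha : Ann s n f) :
    LC s n ≤ f.natDegree := by
  rw [lc_eq]; exact Nat.sInf_le ⟨f, h0, ha, rfl⟩

lemma ann_mono (s : ℕ → D) {m n : ℕ} (h : m ≤ n) {f : Polynomial D} (ha : Ann s n f) :
    Ann s m f := fun j h1 h2 => ha j h1 (h2.trans h)

lemma lc_mono (s : ℕ → D) {m n : ℕ} (h : m ≤ n) : LC s m ≤ LC s n := by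
  obtain ⟨f, h0, ha, hd⟩ := exists_min s n
  exact hd ▸ lc_le s m h0 (ann_mono s h ha)

lemma ann_succ_of_disc (s : ℕ → D) {n : ℕ} {f : Polynomial D} (ha : Ann s n f)
    (hd : B s f (n + 1 - f.natDegree) = 0) : Ann s (n + 1) f := by
  intro j h1 h2
  rcases Nat.lt_or_ge (j + f.natDegree) (n + 1) with h | h
  · exact ha j h1 (by omega)
  · have : j = n + 1 - f.natDegree := by omega
    rw [this]; exact hd

/-- Massey invariant: either the complexity is `0`, or we remember the last jump. -/
def Inv (s : ℕ → D) (n : ℕ) : Prop :=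
  LC s n = 0 ∨ ∃ m : ℕ, ∃ g : Polynomial D, 1 ≤ m ∧ m ≤ n ∧ g ≠ 0 ∧ Ann s (m - 1) g ∧
    g.natDegree + LC s n ≤ m ∧ B s g (m - g.natDegree) ≠ 0

lemma massey_bound [IsDomain D] (s : ℕ → D) {n : ℕ} (hInv : Inv s n) :
    LC s (n + 1) ≤ max (LC s n) (n + 1 - LC s n) := by
  obtain ⟨f, hf0, hfa, hfd⟩ := exists_min s n
  by_cases hδ : B s f (n + 1 - f.natDegree) = 0
  · exact le_trans (hfd ▸ lc_le s (n + 1) hf0 (ann_succ_of_disc s hfa hδ)) (le_max_left _ _)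
  rcases hInv with h0 | ⟨m, g, hm1, hmn, hg0, hga, hgm, hgd⟩
  · rw [h0]
    exact le_trans (lc_le_self s (n + 1)) (by simp)
  set d := LC s n with hd
  set L' := max d (n + 1 - d) with hL'
  by_cases hLn : L' ≤ n
  swap
  · exact le_trans (lc_le_self s (n + 1)) (by omega)
  have hdn : d ≤ n := lc_le_self s n
  set dg := g.natDegree with hdg
  have hL1 : n + 1 - d ≤ L' := le_max_right _ _
  have hL2 : d ≤ L' := le_max_left _ _
  set a := L' - d with ha
  set jstar := n + 1 - L' with hjstar
  set b := m - dg - jstar with hb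
  have key : a + d = L' ∧ jstar + L' = n + 1 ∧ 1 ≤ jstar ∧ b + dg + jstar = m ∧
      b + dg < L' := by omega
  obtain ⟨k1, k2, k3, k4, k5⟩ := key
  set δ := B s f (n + 1 - d) with hδdef
  set δg := B s g (m - dg) with hδgdef
  have hδ' : δ ≠ 0 := by rwa [hfd] at hδ
  set P := C δg * (X ^ a * f) with hP
  set Q := C δ * (X ^ b * g) with hQ
  have hPd : P.natDegree = L' := by
    rw [hP, Polynomial.natDegree_C_mul hgd, Polynomial.natDegree_mul (pow_ne_zero _ Polynomial.X_ne_zero) hf0,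
      Polynomial.natDegree_X_pow, hfd]
    omega
  have hQd : Q.natDegree = b + dg := by
    rw [hQ, Polynomial.natDegree_C_mul hδ', Polynomial.natDegree_mul (pow_ne_zero _ Polynomial.X_ne_zero) hg0,
      Polynomial.natDegree_X_pow]
  have hhd : (P - Q).natDegree = L' := by
    rw [Polynomial.natDegree_sub_eq_left_of_natDegree_lt (by omega), hPd]
  have hh0 : P - Q ≠ 0 := by
    intro h
    rw [h, Polynomial.natDegree_zero] at hhd
    omega
  have hann : Ann s (n + 1) (P - Q) := by
    intro j hj1 hj2
    rw [hhd] at hj2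
    have hjle : j ≤ jstar := by omega
    have hBh : B s (P - Q) j = δg * B s f (j + a) - δ * B s g (j + b) := by
      rw [show B s (P - Q) j = Bn s (L' + 1) (P - Q) j from (Bn_eq_B s (by omega) j).symm,
        Bn_sub, Bn_eq_B s (by omega) j, Bn_eq_B s (by omega) j, hP, hQ,
        B_C_mul_X_pow_mul s δg hgd a f hf0 j, B_C_mul_X_pow_mul s δ hδ' b g hg0 j]
    rcases eq_or_lt_of_le hjle with he | hl
    · have e1 : j + a = n + 1 - d := by omega
      have e2 : j + b = m - dg := by omega
      rw [hBh, e1, e2, ← hδdef, ← hδgdef, mul_comm]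
      ring
    · have e1 : B s f (j + a) = 0 := hfa (j + a) (by omega) (by omega)
      have e2 : B s g (j + b) = 0 := hga (j + b) (by omega) (by omega)
      rw [hBh, e1, e2]
      ring
  calc LC s (n + 1) ≤ (P - Q).natDegree := lc_le s (n + 1) hh0 hann
    _ = L' := hhd

lemma inv_zero (s : ℕ → D) : Inv s 0 := Or.inl (Nat.le_zero.1 (lc_le_self s 0))

lemma inv_succ [IsDomain D] (s : ℕ → D) {n : ℕ} (hInv : Inv s n) : Inv s (n + 1) := by
  have hmono : LC s n ≤ LC s (n + 1) := lc_mono s (by omega)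
  rcases eq_or_lt_of_le hmono with heq | hlt
  · rcases hInv with h0 | ⟨m, g, hm1, hmn, hg0, hga, hgm, hgd⟩
    · exact Or.inl (heq ▸ h0)
    · exact Or.inr ⟨m, g, hm1, hmn.trans (Nat.le_succ n), hg0, hga, heq ▸ hgm, hgd⟩
  · obtain ⟨f, hf0, hfa, hfd⟩ := exists_min s n
    have hδ : B s f (n + 1 - f.natDegree) ≠ 0 := by
      intro h
      have := lc_le s (n + 1) hf0 (ann_succ_of_disc s hfa h)
      omega
    have hb := massey_bound s hInv
    have hself : LC s n ≤ n := lc_le_self s n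
    have hsum : f.natDegree + LC s (n + 1) ≤ n + 1 := by
      rcases le_max_iff.1 hb with h | h <;> omega
    refine Or.inr ⟨n + 1, f, by omega, le_refl _, hf0, ?_, hsum, ?_⟩
    · simpa using hfa
    · exact hδ

lemma inv_all [IsDomain D] (s : ℕ → D) : ∀ n, Inv s n := by
  intro n
  induction n with
  | zero => exact inv_zero s
  | succ n ih => exact inv_succ s ih

lemma massey [IsDomain D] (s : ℕ → D) (n : ℕ) :
    LC s (n + 1) ≤ max (LC s n) (n + 1 - LC s n) := massey_bound s (inv_all s n)

/-- The combinatorial lemma. -/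
lemma sum_aux (L : ℕ → ℕ) (h0 : L 0 = 0) (hmono : ∀ n, L n ≤ L (n + 1))
    (hself : ∀ n, L n ≤ n) (hstep : ∀ n, L (n + 1) ≤ max (L n) (n + 1 - L n)) :
    ∀ n, (∑ i ∈ Finset.Icc 1 n, L i) + L n * L n ≤ L n * (n + 1) := by
  intro n
  induction n with
  | zero => simp [h0]
  | succ n ih =>
    rw [Finset.sum_Icc_succ_top (by omega)]
    rcases eq_or_lt_of_le (hmono n) with heq | hlt
    · rw [← heq]
      nlinarith [ih]
    · have h1 : L (n + 1) ≤ n + 1 - L n := by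
        rcases le_max_iff.1 (hstep n) with h | h <;> omega
      have h3 : L n + L (n + 1) ≤ n + 1 := by
        have := hself n; omega
      zify at ih hlt h3 ⊢
      nlinarith [ih, hlt, h3]

end LCAux

theorem LC_sum_le {D : Type*} [CommRing D] [IsDomain D] (s : ℕ → D) (n : ℕ) :
    ∑ i ∈ Finset.Icc 1 n, LC s i ≤ (n + 1) ^ 2 / 4 := by
  have key := LCAux.sum_aux (LC s) (Nat.le_zero.1 (LCAux.lc_le_self s 0))
    (fun n => LCAux.lc_mono s (Nat.le_succ n)) (fun n => LCAux.lc_le_self s n)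
    (fun n => LCAux.massey s n) n
  rw [Nat.le_div_iff_mul_le (by norm_num)]
  have h2 : 4 * (LC s n * (n + 1)) ≤ (n + 1) ^ 2 + 4 * (LC s n * LC s n) := by
    zify
    nlinarith [sq_nonneg ((n : ℤ) + 1 - 2 * LC s n)]
  zify at key h2 ⊢
  nlinarith [key, h2]
end

section
/- Let D be an integral domain and s ∈ Dⁿ with LC_i the linear complexity of the i-th prefix. Then s has a perfect linear complexity profile (LC_i = ⌊(i+1)/2⌋ for all 1 ≤ i ≤ n) if and only if LC_i ≥ ⌊(i+1)/2⌋ for all 1 ≤ i ≤ n. -/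
open Polynomial

namespace PLCPaux

variable {D : Type*} [CommRing D]

lemma LC_le_s16 (s : ℕ → D) (n : ℕ) {f : Polynomial D} (hf : f ≠ 0)
    (ha : IsAnnihilator s n f) : LC s n ≤ f.natDegree :=
  Nat.sInf_le ⟨f, hf, ha, rfl⟩

lemma exists_min [Nontrivial D] (s : ℕ → D) (n : ℕ) :
    ∃ f : Polynomial D, f ≠ 0 ∧ IsAnnihilator s n f ∧ f.natDegree = LC s n := by
  have h : {d : ℕ | ∃ f : Polynomial D, f ≠ 0 ∧ IsAnnihilator s n f ∧ f.natDegree = d}.Nonempty := by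
    refine ⟨n, X ^ n, (monic_X_pow n).ne_zero, Or.inr fun j hj1 hj2 => ?_, natDegree_X_pow n⟩
    rw [natDegree_X_pow] at hj1
    omega
  exact Nat.sInf_mem h

/-- shifted-sum lemma -/
lemma sum_shift (s : ℕ → D) (p : Polynomial D) (u N t : ℕ) (hN : p.natDegree + u ≤ N) :
    ∑ k ∈ Finset.range (N + 1), (p * X ^ u).coeff k * s (t + k) =
      ∑ k ∈ Finset.range (p.natDegree + 1), p.coeff k * s (t + (u + k)) := by
  have hsub : (Finset.range (p.natDegree + 1)).image (u + ·) ⊆ Finset.range (N + 1) := by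
    intro x hx
    simp only [Finset.mem_image, Finset.mem_range] at hx ⊢
    omega
  rw [← Finset.sum_subset hsub, Finset.sum_image (by intro x _ y _ h; simp only at h; omega)]
  · apply Finset.sum_congr rfl
    intro k hk
    rw [show u + k = k + u from by omega, coeff_mul_X_pow]
  · intro x hx hxim
    simp only [Finset.mem_image, Finset.mem_range] at hx hxim
    rw [coeff_mul_X_pow']
    rcases le_or_gt u x with h | h
    · rw [if_pos h]
      have hk : p.natDegree < x - u := by
        by_contra hc
        push_neg at hxim hc
        exact hxim (x - u) (by omega) (by omega)
      rw [coeff_eq_zero_of_natDegree_lt hk, zero_mul]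
    · rw [if_neg (by omega), zero_mul]

end PLCPaux

namespace PLCPaux

lemma massey_s16 {D : Type*} [CommRing D] [IsDomain D] (s : ℕ → D) (i m : ℕ) (hm : m < i)
    (f g : Polynomial D) (hf : f ≠ 0)
    (haf : ∀ j, f.natDegree + 1 ≤ j → j ≤ i →
      ∑ k ∈ Finset.range (f.natDegree + 1), f.coeff k * s (j - f.natDegree + k) = 0)
    (hag : ∀ j, g.natDegree + 1 ≤ j → j ≤ m →
      ∑ k ∈ Finset.range (g.natDegree + 1), g.coeff k * s (j - g.natDegree + k) = 0)
    (hδ : ∑ k ∈ Finset.range (g.natDegree + 1), g.coeff k * s (m + 1 - g.natDegree + k) ≠ 0) :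
    ∃ h : Polynomial D, h ≠ 0 ∧ IsAnnihilator s (i + 1) h ∧
      h.natDegree ≤ max f.natDegree (g.natDegree + i - m) := by
  set a := f.natDegree with ha
  set b := g.natDegree with hb
  set δ' := ∑ k ∈ Finset.range (b + 1), g.coeff k * s (m + 1 - b + k) with hδ'def
  set δ := ∑ k ∈ Finset.range (a + 1), f.coeff k * s (i + 1 - a + k) with hδdef
  set Dg := max a (b + i - m) with hD
  have hDa : a ≤ Dg := le_max_left _ _
  have hDb' : b + i - m ≤ Dg := le_max_right _ _
  have hDb : b + (i - m) ≤ Dg := by omega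
  set u := Dg - a with hu
  set v := Dg - (b + (i - m)) with hv
  set h := C δ' * (f * X ^ u) - C δ * (g * X ^ v) with hh
  have hdegle : h.natDegree ≤ Dg := by
    refine le_trans (natDegree_sub_le _ _) (sup_le ?_ ?_)
    · exact le_trans (natDegree_C_mul_le _ _)
        (le_trans natDegree_mul_le (by rw [natDegree_X_pow]; omega))
    · exact le_trans (natDegree_C_mul_le _ _)
        (le_trans natDegree_mul_le (by rw [natDegree_X_pow]; omega))
  have hlc : f.coeff a ≠ 0 := by
    rw [ha, coeff_natDegree]
    exact leadingCoeff_ne_zero.mpr hf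
  have hcoe : h.coeff Dg = δ' * f.coeff a := by
    rw [hh, coeff_sub, coeff_C_mul, coeff_C_mul, coeff_mul_X_pow', coeff_mul_X_pow',
      if_pos (show u ≤ Dg by omega), if_pos (show v ≤ Dg by omega),
      show Dg - u = a by omega,
      coeff_eq_zero_of_natDegree_lt (show g.natDegree < Dg - v by omega)]
    ring
  have hcne : h.coeff Dg ≠ 0 := by rw [hcoe]; exact mul_ne_zero hδ hlc
  have hne : h ≠ 0 := fun h0 => hcne (by simp [h0])
  have hdeg : h.natDegree = Dg := le_antisymm hdegle (le_natDegree_of_ne_zero hcne)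
  refine ⟨h, hne, Or.inr fun j hj1 hj2 => ?_, by omega⟩
  rw [hdeg] at hj1 ⊢
  have key : ∑ k ∈ Finset.range (Dg + 1), h.coeff k * s (j - Dg + k)
      = δ' * (∑ k ∈ Finset.range (a + 1), f.coeff k * s (j - a + k))
        - δ * (∑ k ∈ Finset.range (b + 1), g.coeff k * s (j - (i - m) - b + k)) := by
    have e1 := sum_shift s f u Dg (j - Dg) (by omega)
    have e2 := sum_shift s g v Dg (j - Dg) (by omega)
    simp only [hh, coeff_sub, coeff_C_mul, sub_mul, Finset.sum_sub_distrib, mul_assoc,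
      ← Finset.mul_sum]
    rw [e1, e2, ← ha, ← hb]
    congr 1
    · congr 1
      refine Finset.sum_congr rfl fun k _ => ?_
      congr 2
      omega
    · congr 1
      refine Finset.sum_congr rfl fun k _ => ?_
      congr 2
      omega
  rw [key]
  rcases Nat.lt_or_ge j (i + 1) with hji | hji
  · rw [haf j (by omega) (by omega), hag (j - (i - m)) (by omega) (by omega),
      mul_zero, mul_zero, sub_zero]
  · have hj : j = i + 1 := by omega
    subst hj
    have e3 : ∑ k ∈ Finset.range (b + 1), g.coeff k * s (i + 1 - (i - m) - b + k) = δ' := by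
      rw [hδ'def]
      refine Finset.sum_congr rfl fun k _ => ?_
      congr 2
      omega
    rw [e3, ← hδdef]
    ring

end PLCPaux

theorem plcp_iff_ge {D : Type*} [CommRing D] [IsDomain D] (s : ℕ → D) (n : ℕ) :
    (∀ i, 1 ≤ i → i ≤ n → LC s i = (i + 1) / 2) ↔
      (∀ i, 1 ≤ i → i ≤ n → (i + 1) / 2 ≤ LC s i) := by
  constructor
  · intro h i h1 hi
    exact (h i h1 hi).ge
  · intro hlow i
    induction i using Nat.strong_induction_on with
    | _ i IH =>
    intro h1 hin
    refine le_antisymm ?_ (hlow i h1 hin)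
    rcases eq_or_lt_of_le h1 with h1' | h2
    · -- i = 1
      rw [← h1']
      have hX : IsAnnihilator s 1 (X : Polynomial D) := by
        refine Or.inr fun j hj1 hj2 => ?_
        rw [natDegree_X] at hj1
        omega
      have := PLCPaux.LC_le_s16 s 1 X_ne_zero hX
      rw [natDegree_X] at this
      simpa using this
    · -- i ≥ 2
      have hi1 : 1 ≤ i - 1 := by omega
      have hIH1 : LC s (i - 1) = (i - 1 + 1) / 2 := IH (i - 1) (by omega) hi1 (by omega)
      obtain ⟨f, hfne, haf, hfdeg⟩ := PLCPaux.exists_min s (i - 1)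
      have Hw : ∃ (mm : ℕ) (g : Polynomial D), g ≠ 0 ∧
          (∀ j, g.natDegree + 1 ≤ j → j ≤ mm →
            ∑ k ∈ Finset.range (g.natDegree + 1), g.coeff k * s (j - g.natDegree + k) = 0) ∧
          (∑ k ∈ Finset.range (g.natDegree + 1), g.coeff k * s (mm + 1 - g.natDegree + k) ≠ 0) ∧
          mm < i - 1 ∧ g.natDegree + (i - 1) - mm ≤ (i + 1) / 2 := by
        by_cases hcase : i ≤ 3
        · -- witness g = 1, mm = 0; need s 1 ≠ 0
          have hs1 : s 1 ≠ 0 := by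
            intro hs0
            have hann : IsAnnihilator s 1 (1 : Polynomial D) := by
              refine Or.inr fun j hj1 hj2 => ?_
              have hj : j = 1 := by
                rw [natDegree_one] at hj1
                omega
              simp [hj, natDegree_one, hs0]
            have hle := PLCPaux.LC_le_s16 s 1 one_ne_zero hann
            have hge := hlow 1 le_rfl (by omega)
            rw [natDegree_one] at hle
            omega
          refine ⟨0, 1, one_ne_zero, ?_, ?_, by omega, ?_⟩
          · intro j hj1 hj2
            rw [natDegree_one] at hj1
            omega
          · simpa [natDegree_one] using hs1
          · rw [natDegree_one]
            omega
        · -- i ≥ 4 : witness from last jump, at mm = largest even ≤ i - 2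
          set mm := 2 * ((i - 2) / 2) with hmm
          have hmf : mm % 2 = 0 ∧ 2 ≤ mm ∧ mm + 2 ≤ i ∧ i ≤ mm + 3 := by omega
          obtain ⟨g, hgne, hagm', hgdeg⟩ := PLCPaux.exists_min s mm
          have hagm := hagm'.resolve_left hgne
          have hLCm : LC s mm = (mm + 1) / 2 := IH mm (by omega) (by omega) (by omega)
          have hδ : ∑ k ∈ Finset.range (g.natDegree + 1),
              g.coeff k * s (mm + 1 - g.natDegree + k) ≠ 0 := by
            intro h0
            have hann : IsAnnihilator s (mm + 1) g := by
              refine Or.inr fun j hj1 hj2 => ?_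
              rcases Nat.lt_or_ge j (mm + 1) with hj | hj
              · exact hagm j hj1 (by omega)
              · have : j = mm + 1 := by omega
                rw [this]
                exact h0
            have hle := PLCPaux.LC_le_s16 s (mm + 1) hgne hann
            have hge := hlow (mm + 1) (by omega) (by omega)
            rw [hgdeg, hLCm] at hle
            omega
          refine ⟨mm, g, hgne, hagm, hδ, by omega, ?_⟩
          rw [hgdeg, hLCm]
          omega
      obtain ⟨mm, g, hgne, hagm, hδ, hmlt, hbound⟩ := Hw
      obtain ⟨h, hhne, hhann, hhdeg⟩ :=
        PLCPaux.massey_s16 s (i - 1) mm hmlt f g hfne (haf.resolve_left hfne) hagm hδ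
      have hle : LC s (i - 1 + 1) ≤ h.natDegree := PLCPaux.LC_le_s16 s _ hhne hhann
      rw [show i - 1 + 1 = i from by omega] at hle
      have hfd : f.natDegree = (i - 1 + 1) / 2 := hfdeg.trans hIH1
      refine le_trans hle (le_trans hhdeg (max_le ?_ (by omega)))
      rw [hfd]
      omega
end
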